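/- arXiv:2208.13028 — 3 statements merged into one kernel-verified Lean document; each statement's English description precedes it below -/
import Mathlib

section
/- Let n, m, d ∈ ℕ satisfy d ≥ 4. Let G be a (2m, d)-expander graph on n vertices which is also m-joined. Let T be a tree with maximum degree at most d/2 such that |V(T)| ≤ n − (2d+3)m. Then for every vertex t ∈ V(T) and every v ∈ V(G), there exists an embedding (injective graph homomorphism) of T into G mapping t to v. -/
open scoped Classical

/-- The external neighbourhood of `S` in `G`: vertices outside `S` with a neighbour in `S`. -/
noncomputable def extNbhd {V : Type*} [Fintype V] (G : SimpleGraph V) (S : Finset V) :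
    Finset V :=
  Finset.univ.filter fun v => v ∉ S ∧ ∃ u ∈ S, G.Adj u v

/-- `G` is an `(m,d)`-expander: every nonempty `S` with `|S| ≤ m` satisfies `|N(S)| ≥ d|S|`. -/
def IsExpander {V : Type*} [Fintype V] (G : SimpleGraph V) (m d : ℝ) : Prop :=
  ∀ S : Finset V, S.Nonempty → (S.card : ℝ) ≤ m → d * S.card ≤ (extNbhd G S).card

/-- `G` is `(m,m')`-joined: every pair of disjoint sets of sizes `m` and `m'` has an edge
between them. -/
def IsJoined {V : Type*} (G : SimpleGraph V) (m m' : ℕ) : Prop :=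
  ∀ A B : Finset V, Disjoint A B → A.card = m → B.card = m' →
    ∃ a ∈ A, ∃ b ∈ B, G.Adj a b

set_option linter.unusedSectionVars false
set_option linter.unusedVariables false
set_option maxHeartbeats 1600000

namespace TreeEmbedAux
open Finset
variable {V W : Type*} [Fintype V] [Fintype W]

lemma mem_extNbhd {G : SimpleGraph V} {X : Finset V} {z : V} :
    z ∈ extNbhd G X ↔ z ∉ X ∧ ∃ u ∈ X, G.Adj u z := by
  simp [extNbhd]

lemma extNbhd_empty (G : SimpleGraph V) : extNbhd G (∅ : Finset V) = ∅ := by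
  ext z; simp [mem_extNbhd]

/-- capacity of a vertex of `G` w.r.t. a partial embedding `f` defined on `A`. -/
noncomputable def cap (T : SimpleGraph W) (h : ℕ) (A : Finset W) (f : W → V) (y : V) : ℕ :=
  if y ∈ A.image f then ∑ u ∈ A.filter (fun u => f u = y), ((T.neighborFinset u) \ A).card
  else h

lemma cap_le (T : SimpleGraph W) (h : ℕ) (A : Finset W) (f : W → V)
    (hinj : Set.InjOn f A) (hdeg : ∀ w, (T.neighborFinset w).card ≤ h) (y : V) :
    cap T h A f y ≤ h := by
  unfold cap
  split_ifs with hy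
  · obtain ⟨u, hu, hfu⟩ := mem_image.mp hy
    have hfil : A.filter (fun u' => f u' = y) = {u} := by
      ext u'
      simp only [mem_filter, mem_singleton]
      constructor
      · rintro ⟨hu', hfu'⟩
        exact hinj hu' hu (by rw [hfu', hfu])
      · rintro rfl; exact ⟨hu, hfu⟩
    rw [hfil, sum_singleton]
    exact le_trans (card_le_card (sdiff_subset)) (hdeg u)
  · exact le_rfl

/-- Goodness of a partial embedding. -/
def Good (G : SimpleGraph V) (T : SimpleGraph W) (m h : ℕ) (A : Finset W) (f : W → V) : Prop :=
  ∀ X : Finset V, X.Nonempty → X.card ≤ 2*m →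
    ∑ y ∈ X, cap T h A f y ≤ ((extNbhd G X) \ A.image f).card

def Tight (G : SimpleGraph V) (T : SimpleGraph W) (m h : ℕ) (A : Finset W) (f : W → V)
    (X : Finset V) : Prop :=
  X.card ≤ 2*m ∧ ((extNbhd G X) \ A.image f).card ≤ ∑ y ∈ X, cap T h A f y

lemma tight_empty (G : SimpleGraph V) (T : SimpleGraph W) (m h : ℕ) (A : Finset W) (f : W → V) :
    Tight G T m h A f ∅ :=
  ⟨by simp, by simp [extNbhd_empty]⟩

/-- consequence of joinedness: any set of size ≥ m together with its external
neighbourhood covers all but fewer than m vertices. -/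
lemma joined_cover {G : SimpleGraph V} {m : ℕ} (hm : 1 ≤ m) (hj : IsJoined G m m)
    (X : Finset V) (hX : m ≤ X.card) :
    Fintype.card V < X.card + (extNbhd G X).card + m := by
  set R : Finset V := univ \ (X ∪ extNbhd G X) with hR
  have hRm : R.card < m := by
    by_contra hc
    push_neg at hc
    obtain ⟨B, hBR, hBcard⟩ := exists_subset_card_eq hc
    obtain ⟨A, hAX, hAcard⟩ := exists_subset_card_eq hX
    have hdisj : Disjoint A B := by
      refine disjoint_left.mpr fun a haA haB => ?_
      have := hBR haB
      rw [hR, mem_sdiff, mem_union] at this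
      exact this.2 (Or.inl (hAX haA))
    obtain ⟨a, haA, b, hbB, hab⟩ := hj A B hdisj hAcard hBcard
    have hbR := hBR hbB
    rw [hR, mem_sdiff, mem_union] at hbR
    have hbX : b ∉ X := fun hb => hbR.2 (Or.inl hb)
    exact hbR.2 (Or.inr (mem_extNbhd.mpr ⟨hbX, a, hAX haA, hab⟩))
  have hcover : (univ : Finset V).card ≤ (X ∪ extNbhd G X).card + R.card := by
    rw [hR]
    have := card_sdiff_add_card_eq_card (subset_univ (X ∪ extNbhd G X))
    omega
  have hcup : (X ∪ extNbhd G X).card ≤ X.card + (extNbhd G X).card := card_union_le _ _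
  rw [Finset.card_univ] at hcover
  omega

/-- T1: tight sets have size < m. -/
lemma tight_card_lt {G : SimpleGraph V} {T : SimpleGraph W} {m h d : ℕ} {A : Finset W}
    {f : W → V} (hm : 1 ≤ m) (hh : 2 ≤ h) (hhd : 2*h ≤ d)
    (hj : IsJoined G m m)
    (hinj : Set.InjOn f A)
    (hdeg : ∀ w, (T.neighborFinset w).card ≤ h)
    (hsize : A.card + (2*d+3)*m ≤ Fintype.card V)
    (hgood : Good G T m h A f)
    {X : Finset V} (ht : Tight G T m h A f X) : X.card < m := by
  by_contra hc
  push_neg at hc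
  obtain ⟨hX2m, hts⟩ := ht
  set S := A.image f with hS
  have hScard : S.card ≤ A.card := card_image_le
  have hcapsum : ∑ y ∈ X, cap T h A f y ≤ h * X.card := by
    calc ∑ y ∈ X, cap T h A f y ≤ ∑ _y ∈ X, h :=
          sum_le_sum fun y _ => cap_le T h A f hinj hdeg y
      _ = h * X.card := by rw [sum_const, smul_eq_mul, mul_comm]
  have hcov := joined_cover hm hj X hc
  have hN1 : (extNbhd G X).card ≤ ((extNbhd G X) \ S).card + S.card := by
    have := card_le_card_sdiff_add_card (s := extNbhd G X) (t := S)
    omega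
  -- products
  have h1 : h * X.card ≤ h * (2*m) := Nat.mul_le_mul_left h hX2m
  have h2 : 2*h*m ≤ d*m := Nat.mul_le_mul_right m hhd
  have h3 : h * (2*m) = 2*h*m := by ring
  have h4 : (2*d+3)*m = 2*(d*m) + 3*m := by ring
  -- combine: n < X.card + N + m ≤ 2m + (NS + S) + m ≤ 3m + h*2m + S
  -- and S + 2dm + 3m ≤ n
  have hhm : 1 ≤ h * m := Nat.one_le_iff_ne_zero.mpr (by positivity)
  omega

/-- submodularity of `X ↦ |N(X) \ S|`. -/
lemma ext_submodular (G : SimpleGraph V) (S : Finset V) (X Y : Finset V) :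
    ((extNbhd G (X ∪ Y)) \ S).card + ((extNbhd G (X ∩ Y)) \ S).card ≤
      ((extNbhd G X) \ S).card + ((extNbhd G Y) \ S).card := by
  set P := (extNbhd G (X ∪ Y)) \ S
  set Q := (extNbhd G (X ∩ Y)) \ S
  set R1 := (extNbhd G X) \ S
  set R2 := (extNbhd G Y) \ S
  have hU : P ∪ Q ⊆ R1 ∪ R2 := by
    intro z hz
    rw [mem_union] at hz
    rcases hz with hz | hz
    · rw [mem_sdiff, mem_extNbhd] at hz
      obtain ⟨⟨hzn, a, ha, hadj⟩, hzS⟩ := hz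
      rw [mem_union] at ha hzn
      push_neg at hzn
      rcases ha with ha | ha
      · exact mem_union_left _ (mem_sdiff.mpr ⟨mem_extNbhd.mpr ⟨hzn.1, a, ha, hadj⟩, hzS⟩)
      · exact mem_union_right _ (mem_sdiff.mpr ⟨mem_extNbhd.mpr ⟨hzn.2, a, ha, hadj⟩, hzS⟩)
    · rw [mem_sdiff, mem_extNbhd] at hz
      obtain ⟨⟨hzn, a, ha, hadj⟩, hzS⟩ := hz
      rw [mem_inter] at ha
      by_cases hzX : z ∈ X
      · have hzY : z ∉ Y := fun hzY => hzn (mem_inter.mpr ⟨hzX, hzY⟩)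
        exact mem_union_right _ (mem_sdiff.mpr ⟨mem_extNbhd.mpr ⟨hzY, a, ha.2, hadj⟩, hzS⟩)
      · exact mem_union_left _ (mem_sdiff.mpr ⟨mem_extNbhd.mpr ⟨hzX, a, ha.1, hadj⟩, hzS⟩)
  have hI : P ∩ Q ⊆ R1 ∩ R2 := by
    intro z hz
    rw [mem_inter] at hz
    obtain ⟨hzP, hzQ⟩ := hz
    rw [mem_sdiff, mem_extNbhd] at hzP hzQ
    obtain ⟨⟨hzn, _, _, _⟩, hzS⟩ := hzP
    obtain ⟨⟨_, a, ha, hadj⟩, _⟩ := hzQ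
    rw [mem_union] at hzn
    push_neg at hzn
    rw [mem_inter] at ha
    exact mem_inter.mpr ⟨mem_sdiff.mpr ⟨mem_extNbhd.mpr ⟨hzn.1, a, ha.1, hadj⟩, hzS⟩,
      mem_sdiff.mpr ⟨mem_extNbhd.mpr ⟨hzn.2, a, ha.2, hadj⟩, hzS⟩⟩
  have e1 : P.card + Q.card = (P ∪ Q).card + (P ∩ Q).card :=
    (card_union_add_card_inter P Q).symm
  have e2 : (R1 ∪ R2).card + (R1 ∩ R2).card = R1.card + R2.card :=
    card_union_add_card_inter R1 R2
  have := card_le_card hU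
  have := card_le_card hI
  omega

/-- T2: tight sets are closed under union. -/
lemma tight_union {G : SimpleGraph V} {T : SimpleGraph W} {m h d : ℕ} {A : Finset W}
    {f : W → V} (hm : 1 ≤ m) (hh : 2 ≤ h) (hhd : 2*h ≤ d)
    (hj : IsJoined G m m)
    (hinj : Set.InjOn f A)
    (hdeg : ∀ w, (T.neighborFinset w).card ≤ h)
    (hsize : A.card + (2*d+3)*m ≤ Fintype.card V)
    (hgood : Good G T m h A f)
    {X Y : Finset V} (hX : Tight G T m h A f X) (hY : Tight G T m h A f Y) :
    Tight G T m h A f (X ∪ Y) := by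
  have hXm := tight_card_lt hm hh hhd hj hinj hdeg hsize hgood hX
  have hYm := tight_card_lt hm hh hhd hj hinj hdeg hsize hgood hY
  have hUcard : (X ∪ Y).card ≤ 2*m := le_trans (card_union_le _ _) (by omega)
  refine ⟨hUcard, ?_⟩
  have hsub := ext_submodular G (A.image f) X Y
  have hsum : ∑ y ∈ X ∪ Y, cap T h A f y + ∑ y ∈ X ∩ Y, cap T h A f y
      = ∑ y ∈ X, cap T h A f y + ∑ y ∈ Y, cap T h A f y :=
    sum_union_inter
  have hgU : ∑ y ∈ X ∪ Y, cap T h A f y ≤ ((extNbhd G (X ∪ Y)) \ A.image f).card := by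
    rcases (X ∪ Y).eq_empty_or_nonempty with he | hne
    · simp [he]
    · exact hgood _ hne hUcard
  have hgI : ∑ y ∈ X ∩ Y, cap T h A f y ≤ ((extNbhd G (X ∩ Y)) \ A.image f).card := by
    rcases (X ∩ Y).eq_empty_or_nonempty with he | hne
    · simp [he]
    · exact hgood _ hne (le_trans (card_le_card inter_subset_union) hUcard)
  have := hX.2
  have := hY.2
  omega

/-- The key extension lemma: a good partial embedding can be extended to a new leaf. -/
lemma exists_good_extension {G : SimpleGraph V} {T : SimpleGraph W} {m h d : ℕ}
    {A : Finset W} {f : W → V} (hm : 1 ≤ m) (hh : 2 ≤ h) (hhd : 2*h ≤ d)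
    (hj : IsJoined G m m)
    (hinj : Set.InjOn f A)
    (hdeg : ∀ w, (T.neighborFinset w).card ≤ h)
    (hsize : A.card + (2*d+3)*m ≤ Fintype.card V)
    (hgood : Good G T m h A f)
    {u w : W} (hu : u ∈ A) (hw : w ∉ A) (huw : T.Adj u w) :
    ∃ y : V, G.Adj (f u) y ∧ y ∉ A.image f ∧
      Good G T m h (insert w A) (Function.update f w y) := by
  classical
  set x := f u with hx
  set S := A.image f with hS
  have hxS : x ∈ S := mem_image_of_mem f hu
  have hfilx : A.filter (fun u' => f u' = x) = {u} := by
    ext u'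
    simp only [mem_filter, mem_singleton]
    constructor
    · rintro ⟨hu', hfu'⟩
      exact hinj hu' hu hfu'
    · rintro rfl; exact ⟨hu, rfl⟩
  have hwmem : w ∈ (T.neighborFinset u) \ A := by
    rw [mem_sdiff, SimpleGraph.mem_neighborFinset]
    exact ⟨huw, hw⟩
  have hcapx : cap T h A f x = ((T.neighborFinset u) \ A).card := by
    rw [cap, if_pos hxS, hfilx, sum_singleton]
  have hcapx1 : 1 ≤ cap T h A f x := by
    rw [hcapx]
    exact card_pos.mpr ⟨w, hwmem⟩
  -- maximal tight set avoiding x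
  set 𝒯 : Finset (Finset V) :=
    (univ : Finset V).powerset.filter (fun X => Tight G T m h A f X ∧ x ∉ X) with h𝒯
  set C : Finset V := 𝒯.sup id with hCdef
  have hC : Tight G T m h A f C ∧ x ∉ C := by
    refine sup_induction (p := fun X => Tight G T m h A f X ∧ x ∉ X)
      ⟨tight_empty G T m h A f, notMem_empty x⟩ ?_ ?_
    · rintro X ⟨hX1, hX2⟩ Y ⟨hY1, hY2⟩
      refine ⟨tight_union hm hh hhd hj hinj hdeg hsize hgood hX1 hY1, ?_⟩
      rw [sup_eq_union, mem_union]
      rintro (hc | hc)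
      exacts [hX2 hc, hY2 hc]
    · intro X hX
      exact (mem_filter.mp hX).2
  have hCsub : ∀ X : Finset V, Tight G T m h A f X → x ∉ X → X ⊆ C := by
    intro X h1 h2
    exact le_sup (f := id) (mem_filter.mpr ⟨mem_powerset.mpr (subset_univ X), h1, h2⟩)
  have hCm : C.card < m := tight_card_lt hm hh hhd hj hinj hdeg hsize hgood hC.1
  -- existence of a suitable image y
  have hychoice : ∃ y : V, G.Adj x y ∧ y ∉ S ∧ y ∉ C ∧ y ∉ extNbhd G C := by
    by_contra hcon
    push_neg at hcon
    set Xs : Finset V := insert x C with hXs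
    have hXscard : Xs.card ≤ 2*m := by
      have hci := card_insert_le x C
      rw [← hXs] at hci
      omega
    have hsplit : ∑ y ∈ Xs, cap T h A f y = cap T h A f x + ∑ y ∈ C, cap T h A f y :=
      sum_insert hC.2
    have hgoodXs : ∑ y ∈ Xs, cap T h A f y ≤ ((extNbhd G Xs) \ S).card :=
      hgood Xs (insert_nonempty x C) hXscard
    rw [hsplit] at hgoodXs
    have hNsub : (extNbhd G Xs) \ S ⊆ (extNbhd G C) \ S := by
      intro z hz
      rw [mem_sdiff, mem_extNbhd] at hz
      obtain ⟨⟨hzn, a, ha, hadj⟩, hzS⟩ := hz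
      have hzC : z ∉ C := fun hc => hzn (mem_insert.mpr (Or.inr hc))
      rw [mem_insert] at ha
      rcases ha with rfl | ha
      · -- a = x : z is a neighbour of x outside S
        have := hcon z hadj hzS hzC
        exact mem_sdiff.mpr ⟨this, hzS⟩
      · exact mem_sdiff.mpr ⟨mem_extNbhd.mpr ⟨hzC, a, ha, hadj⟩, hzS⟩
    have hle := card_le_card hNsub
    have hCt : ((extNbhd G C) \ S).card ≤ ∑ y ∈ C, cap T h A f y := hC.1.2
    omega
  obtain ⟨y, hadjxy, hyS, hyC, hyNC⟩ := hychoice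
  refine ⟨y, hadjxy, hyS, ?_⟩
  -- set up the new embedding
  set A' : Finset W := insert w A with hA'
  set f' : W → V := Function.update f w y with hf'
  have hfA : ∀ a ∈ A, f' a = f a := fun a ha =>
    Function.update_of_ne (by rintro rfl; exact hw ha) y f
  have himage : A'.image f' = insert y S := by
    rw [hA', image_insert]
    have : A.image f' = A.image f := image_congr fun a ha => hfA a ha
    rw [this, hf', Function.update_self]
  have hyx : y ≠ x := fun hh' => hyS (hh' ▸ hxS)
  -- filters for the new embedding
  have hfil : ∀ z : V, z ≠ y →
      A'.filter (fun u' => f' u' = z) = A.filter (fun u' => f u' = z) := by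
    intro z hz
    ext a
    simp only [hA', mem_filter, mem_insert]
    constructor
    · rintro ⟨rfl | ha, hfa⟩
      · rw [hf', Function.update_self] at hfa
        exact absurd hfa.symm hz
      · rw [hfA a ha] at hfa
        exact ⟨ha, hfa⟩
    · rintro ⟨ha, hfa⟩
      exact ⟨Or.inr ha, by rw [hfA a ha]; exact hfa⟩
  have hfily : A'.filter (fun u' => f' u' = y) = {w} := by
    ext a
    simp only [hA', mem_filter, mem_insert, mem_singleton]
    constructor
    · rintro ⟨rfl | ha, hfa⟩
      · rfl
      · rw [hfA a ha] at hfa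
        exact absurd (hfa ▸ mem_image_of_mem f ha) hyS
    · rintro rfl
      exact ⟨Or.inl rfl, by rw [hf', Function.update_self]⟩
  -- capacity comparisons
  have hcaple : ∀ z : V, cap T h A' f' z ≤ cap T h A f z := by
    intro z
    by_cases hzy : z = y
    · subst hzy
      have h1 : cap T h A' f' z = ((T.neighborFinset w) \ A').card := by
        rw [cap, if_pos (by rw [himage]; exact mem_insert_self z S), hfily, sum_singleton]
      have h2 : cap T h A f z = h := by rw [cap, if_neg hyS]
      rw [h1, h2]
      exact le_trans (card_le_card sdiff_subset) (hdeg w)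
    · by_cases hzS : z ∈ S
      · have hz' : z ∈ A'.image f' := by rw [himage]; exact mem_insert_of_mem hzS
        rw [cap, if_pos hz', cap, if_pos hzS, hfil z hzy]
        refine sum_le_sum fun a ha => card_le_card (sdiff_subset_sdiff le_rfl ?_)
        exact subset_insert w A
      · have hz' : z ∉ A'.image f' := by
          rw [himage, mem_insert]
          rintro (rfl | hc)
          exacts [hzy rfl, hzS hc]
        rw [cap, if_neg hz', cap, if_neg hzS]
  have hcapx' : cap T h A' f' x + 1 ≤ cap T h A f x := by
    have hx' : x ∈ A'.image f' := by rw [himage]; exact mem_insert_of_mem hxS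
    have h1 : cap T h A' f' x = ((T.neighborFinset u) \ A').card := by
      rw [cap, if_pos hx', hfil x (Ne.symm hyx), hfilx, sum_singleton]
    have h2 : (T.neighborFinset u) \ A' = ((T.neighborFinset u) \ A).erase w := by
      rw [hA', sdiff_insert]
    rw [h1, h2, hcapx, card_erase_of_mem hwmem]
    have := card_pos.mpr ⟨w, hwmem⟩
    omega
  -- goodness of the extension
  intro X hne hX2m
  have hgoodX : ∑ y ∈ X, cap T h A f y ≤ ((extNbhd G X) \ S).card := hgood X hne hX2m
  have hNS' : (extNbhd G X) \ A'.image f' = ((extNbhd G X) \ S).erase y := by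
    rw [himage, sdiff_insert]
  rw [hNS']
  have hsle : ∑ z ∈ X, cap T h A' f' z ≤ ∑ z ∈ X, cap T h A f z :=
    sum_le_sum fun z _ => hcaple z
  have herase : ((extNbhd G X) \ S).card - 1 ≤ (((extNbhd G X) \ S).erase y).card :=
    pred_card_le_card_erase
  by_cases hxX : x ∈ X
  · have hsum1 : ∑ z ∈ X, cap T h A' f' z + 1 ≤ ∑ z ∈ X, cap T h A f z := by
      rw [← Finset.add_sum_erase X _ hxX, ← Finset.add_sum_erase X (cap T h A f) hxX]
      have := sum_le_sum (f := cap T h A' f') (g := cap T h A f)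
        (fun z (_ : z ∈ X.erase x) => hcaple z)
      omega
    omega
  · by_cases hyN : y ∈ extNbhd G X
    · have hnt : ¬ Tight G T m h A f X := by
        intro ht
        have hsub := hCsub X ht hxX
        obtain ⟨hyn, a, ha, hadj⟩ := mem_extNbhd.mp hyN
        exact hyNC (mem_extNbhd.mpr ⟨hyC, a, hsub ha, hadj⟩)
      rw [Tight, not_and] at hnt
      have hstrict : ¬ (((extNbhd G X) \ S).card ≤ ∑ y ∈ X, cap T h A f y) := hnt hX2m
      omega
    · have hyns : y ∉ (extNbhd G X) \ S := fun hc => hyN (mem_sdiff.mp hc).1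
      rw [erase_eq_of_notMem hyns]
      omega

/-- A walk from inside `A` to outside `A` crosses an edge of the boundary. -/
lemma exists_boundary {T : SimpleGraph W} {A : Finset W} :
    ∀ {a b : W} (p : T.Walk a b), a ∈ A → b ∉ A → ∃ u w, u ∈ A ∧ w ∉ A ∧ T.Adj u w := by
  intro a b p
  induction p with
  | nil => intro ha hb; exact absurd ha hb
  | @cons a c b hadj q ih =>
    intro ha hb
    by_cases hc : c ∈ A
    · exact ih hc hb
    · exact ⟨a, c, ha, hc, hadj⟩

/-- In an acyclic graph, a vertex outside `A` has at most one neighbour inside `A`,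
provided `A` is walk-connected (witnessed through walks from `t`). -/
lemma unique_nbr {T : SimpleGraph W} (hT : T.IsAcyclic) {A : Finset W} {t w u1 u2 : W}
    (hw : w ∉ A) (h1 : T.Adj w u1) (h2 : T.Adj w u2)
    (p1 : T.Walk t u1) (hp1 : ∀ x ∈ p1.support, x ∈ A)
    (p2 : T.Walk t u2) (hp2 : ∀ x ∈ p2.support, x ∈ A) : u1 = u2 := by
  classical
  set q0 : T.Walk u1 u2 := p1.reverse.append p2 with hq0
  have hq0sup : ∀ x ∈ q0.support, x ∈ A := by
    intro x hx
    rw [hq0, SimpleGraph.Walk.mem_support_append_iff] at hx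
    rcases hx with hx | hx
    · rw [SimpleGraph.Walk.support_reverse, List.mem_reverse] at hx
      exact hp1 x hx
    · exact hp2 x hx
  set q : T.Walk u1 u2 := q0.bypass with hq
  have hqpath : q.IsPath := SimpleGraph.Walk.bypass_isPath q0
  have hqsup : ∀ x ∈ q.support, x ∈ A := fun x hx =>
    hq0sup x (SimpleGraph.Walk.support_bypass_subset q0 hx)
  have hwq : w ∉ q.support := fun hc => hw (hqsup w hc)
  have heq := hT.path_unique ⟨SimpleGraph.Walk.cons h1 q, hqpath.cons hwq⟩
    (SimpleGraph.Path.singleton h2)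
  have hlen := congrArg (fun p : T.Path w u2 => (p : T.Walk w u2).length) heq
  simp only [SimpleGraph.Path.singleton, SimpleGraph.Walk.length_cons,
    SimpleGraph.Walk.length_nil] at hlen
  have hql : q.length = 0 := by omega
  exact SimpleGraph.Walk.eq_of_length_eq_zero hql

def Inv (G : SimpleGraph V) (T : SimpleGraph W) (t : W) (v : V) (m h : ℕ)
    (A : Finset W) (f : W → V) : Prop :=
  t ∈ A ∧ f t = v ∧ Set.InjOn f ↑A ∧
  (∀ u1 ∈ A, ∀ u2 ∈ A, T.Adj u1 u2 → G.Adj (f u1) (f u2)) ∧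
  (∀ a ∈ A, ∃ p : T.Walk t a, ∀ x ∈ p.support, x ∈ A) ∧
  Good G T m h A f

/-- the inductive construction of the embedding. -/
lemma build {G : SimpleGraph V} {T : SimpleGraph W} {t : W} {v : V} {m h d : ℕ}
    (hm : 1 ≤ m) (hh : 2 ≤ h) (hhd : 2*h ≤ d)
    (hj : IsJoined G m m)
    (hdeg : ∀ w, (T.neighborFinset w).card ≤ h)
    (htree : T.IsTree)
    (hsizeW : Fintype.card W + (2*d+3)*m ≤ Fintype.card V) :
    ∀ (k : ℕ) (A : Finset W) (f : W → V), Inv G T t v m h A f →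
      Fintype.card W ≤ A.card + k → ∃ g : W → V, Inv G T t v m h univ g := by
  intro k
  induction k with
  | zero =>
    intro A f hinv hcard
    have hle := card_le_univ A
    have hA : A = univ := eq_univ_of_card A (by omega)
    exact ⟨f, hA ▸ hinv⟩
  | succ k ih =>
    intro A f hinv hcard
    by_cases hA : A = univ
    · exact ⟨f, hA ▸ hinv⟩
    · obtain ⟨htA, hft, hinj, hhom, hwalk, hgood⟩ := hinv
      obtain ⟨b, hb⟩ : ∃ b, b ∉ A := by
        by_contra hc
        push_neg at hc
        exact hA (eq_univ_iff_forall.mpr hc)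
      obtain ⟨p⟩ := htree.isConnected.preconnected t b
      obtain ⟨u, w, hu, hw, huw⟩ := exists_boundary p htA hb
      have hle := card_le_univ A
      have hsize' : A.card + (2*d+3)*m ≤ Fintype.card V := by omega
      obtain ⟨y, hadj, hyS, hgood'⟩ :=
        exists_good_extension hm hh hhd hj hinj hdeg hsize' hgood hu hw huw
      have hupw : Function.update f w y w = y := Function.update_self w y f
      have hupA : ∀ a ∈ A, Function.update f w y a = f a := fun a ha =>
        Function.update_of_ne (by rintro rfl; exact hw ha) y f
      refine ih (insert w A) (Function.update f w y)
        ⟨mem_insert_of_mem htA, ?_, ?_, ?_, ?_, hgood'⟩ ?_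
      · rw [hupA t htA, hft]
      · -- injectivity
        intro a ha b' hb' heq
        rw [coe_insert, Set.mem_insert_iff] at ha hb'
        rcases ha with ha | ha <;> rcases hb' with hb' | hb'
        · rw [ha, hb']
        · subst ha
          exfalso
          rw [hupw, hupA b' (mem_coe.mp hb')] at heq
          exact hyS (heq ▸ mem_image_of_mem f (mem_coe.mp hb'))
        · subst hb'
          exfalso
          rw [hupw, hupA a (mem_coe.mp ha)] at heq
          exact hyS (heq ▸ mem_image_of_mem f (mem_coe.mp ha))
        · rw [hupA a (mem_coe.mp ha), hupA b' (mem_coe.mp hb')] at heq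
          exact hinj ha hb' heq
      · -- homomorphism property
        intro u1 hu1 u2 hu2 hadj12
        rw [mem_insert] at hu1 hu2
        rcases hu1 with hu1 | hu1 <;> rcases hu2 with hu2 | hu2
        · rw [hu1, hu2] at hadj12
          exact absurd hadj12 (T.irrefl)
        · subst hu1
          obtain ⟨p2, hp2⟩ := hwalk u2 hu2
          obtain ⟨pu, hpu⟩ := hwalk u hu
          have he : u2 = u := unique_nbr htree.IsAcyclic hw hadj12 huw.symm p2 hp2 pu hpu
          subst he
          rw [hupw, hupA u2 hu2]
          exact hadj.symm
        · subst hu2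
          obtain ⟨p1, hp1⟩ := hwalk u1 hu1
          obtain ⟨pu, hpu⟩ := hwalk u hu
          have he : u1 = u := unique_nbr htree.IsAcyclic hw hadj12.symm huw.symm p1 hp1 pu hpu
          subst he
          rw [hupw, hupA u1 hu1]
          exact hadj
        · rw [hupA u1 hu1, hupA u2 hu2]
          exact hhom u1 hu1 u2 hu2 hadj12
      · -- walk-connectivity
        intro a ha
        rw [mem_insert] at ha
        rcases ha with ha | ha
        · subst ha
          obtain ⟨pu, hpu⟩ := hwalk u hu
          refine ⟨pu.append (SimpleGraph.Walk.cons huw SimpleGraph.Walk.nil), ?_⟩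
          intro x hx
          rw [SimpleGraph.Walk.mem_support_append_iff] at hx
          rcases hx with hx | hx
          · exact mem_insert_of_mem (hpu x hx)
          · simp only [SimpleGraph.Walk.support_cons, SimpleGraph.Walk.support_nil,
              List.mem_cons, List.mem_singleton, List.not_mem_nil, or_false] at hx
            rcases hx with hx | hx
            · rw [hx]; exact mem_insert_of_mem hu
            · rw [hx]; exact mem_insert_self _ _
        · obtain ⟨pa, hpa⟩ := hwalk a ha
          exact ⟨pa, fun x hx => mem_insert_of_mem (hpa x hx)⟩
      · rw [card_insert_of_notMem hw]
        omega

lemma inv_base {G : SimpleGraph V} {T : SimpleGraph W} {m h d : ℕ}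
    (hm : 1 ≤ m) (hh : 2 ≤ h) (hhd : 2*h ≤ d)
    (hdeg : ∀ w, (T.neighborFinset w).card ≤ h)
    (hexpN : ∀ X : Finset V, X.Nonempty → X.card ≤ 2*m → d * X.card ≤ (extNbhd G X).card)
    (t : W) (v : V) : Inv G T t v m h {t} (fun _ => v) := by
  have hinj : Set.InjOn (fun _ : W => v) ↑({t} : Finset W) := by
    intro a ha b hb _
    simp only [coe_singleton, Set.mem_singleton_iff] at ha hb
    rw [ha, hb]
  refine ⟨mem_singleton_self t, rfl, hinj, ?_, ?_, ?_⟩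
  · intro u1 hu1 u2 hu2 hadj
    rw [mem_singleton] at hu1 hu2
    subst hu1; subst hu2
    exact absurd hadj (T.irrefl)
  · intro a ha
    rw [mem_singleton] at ha
    subst ha
    exact ⟨SimpleGraph.Walk.nil, by simp⟩
  · intro X hne hX2m
    have himg : ({t} : Finset W).image (fun _ : W => v) = {v} := by simp
    rw [himg]
    have hsum : ∑ y ∈ X, cap T h {t} (fun _ => v) y ≤ h * X.card := by
      calc ∑ y ∈ X, cap T h {t} (fun _ => v) y ≤ ∑ _y ∈ X, h :=
            sum_le_sum fun y _ => cap_le T h {t} _ hinj hdeg y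
        _ = h * X.card := by rw [sum_const, smul_eq_mul, mul_comm]
    have hexpX := hexpN X hne hX2m
    have hsd : (extNbhd G X).card ≤ ((extNbhd G X) \ ({v} : Finset V)).card + 1 := by
      have := card_le_card_sdiff_add_card (s := extNbhd G X) (t := ({v} : Finset V))
      simpa using this
    have hprod : 2*(h * X.card) ≤ d * X.card := by
      calc 2*(h*X.card) = (2*h) * X.card := by ring
        _ ≤ d * X.card := Nat.mul_le_mul_right _ hhd
    have hpos : 2 ≤ h * X.card := by
      calc 2 = 2 * 1 := by ring
        _ ≤ h * X.card := Nat.mul_le_mul hh (card_pos.mpr hne)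
    omega

end TreeEmbedAux

/-- Tree embedding in expanders. If `G` is a `(2m,d)`-expander on `n`
vertices (`d ≥ 4`) which is `m`-joined, and `T` is a tree with maximum degree at most `d/2`
and at most `n - (2d+3)m` vertices, then for every `t ∈ V(T)` and `v ∈ V(G)` there is an
embedding of `T` into `G` mapping `t` to `v`. -/
theorem tree_embedding_expander {V W : Type*} [Fintype V] [Fintype W]
    (G : SimpleGraph V) (T : SimpleGraph W) (n m d : ℕ) (hd : 4 ≤ d)
    (hn : Fintype.card V = n)
    (hexp : IsExpander G (2 * (m : ℝ)) d) (hj : IsJoined G m m)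
    (htree : T.IsTree) (hdeg : ∀ w : W, (T.degree w : ℝ) ≤ (d : ℝ) / 2)
    (hsize : Fintype.card W + (2 * d + 3) * m ≤ n) :
    ∀ (t : W) (v : V), ∃ f : T →g G, Function.Injective f ∧ f t = v := by
  classical
  intro t v
  rcases Nat.eq_zero_or_pos m with hm0 | hm
  · subst hm0
    obtain ⟨a, ha, -⟩ := hj ∅ ∅ (by simp) (by simp) (by simp)
    exact absurd ha (Finset.notMem_empty a)
  · set h : ℕ := d / 2 with hhdef
    have hh : 2 ≤ h := by omega
    have hhd : 2 * h ≤ d := by omega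
    have hdegN : ∀ w : W, (T.neighborFinset w).card ≤ h := by
      intro w
      have h1 := hdeg w
      have h2 : 2 * (T.degree w : ℝ) ≤ (d : ℝ) := by linarith
      have h3 : 2 * T.degree w ≤ d := by exact_mod_cast h2
      rw [SimpleGraph.card_neighborFinset_eq_degree]
      omega
    have hexpN : ∀ X : Finset V, X.Nonempty → X.card ≤ 2 * m →
        d * X.card ≤ (extNbhd G X).card := by
      intro X hne hc
      have hc' : (X.card : ℝ) ≤ 2 * (m : ℝ) := by exact_mod_cast hc
      have := hexp X hne hc'
      exact_mod_cast this
    have hsizeV : Fintype.card W + (2 * d + 3) * m ≤ Fintype.card V := by omega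
    have hbase := TreeEmbedAux.inv_base (G := G) (T := T) hm hh hhd hdegN hexpN t v
    obtain ⟨g, hg⟩ := TreeEmbedAux.build hm hh hhd hj hdegN htree hsizeV
      (Fintype.card W) {t} (fun _ => v) hbase (by simp)
    obtain ⟨-, hgt, hginj, hghom, -, -⟩ := hg
    refine ⟨⟨g, fun {a b} hab => hghom a (Finset.mem_univ a) b (Finset.mem_univ b) hab⟩,
      ?_, hgt⟩
    have huniv : Set.InjOn g Set.univ := by rwa [Finset.coe_univ] at hginj
    exact Set.injOn_univ.mp huniv
end

section
/- Let d, k, M, m, n satisfy d ≥ 2, k + 1 ≥ m, m ≤ M and M ≤ n/4. Suppose G is an n-vertex graph which is a (k,d)-expander and (m,M)-joined. If G is not Hamiltonian, then G has at least (1/16)·binom(n,2) boosters. -/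
open scoped Classical

/-- The length of a longest path in `G`. -/
noncomputable def maxPathLen {V : Type*} [Fintype V] (G : SimpleGraph V) : ℕ :=
  sSup {n | ∃ (u v : V) (w : G.Walk u v), w.IsPath ∧ w.length = n}

/-- `G` together with the (potential) edge `uv`. -/
def addEdge {V : Type*} (G : SimpleGraph V) (u v : V) : SimpleGraph V :=
  G ⊔ SimpleGraph.fromEdgeSet {s(u, v)}

/-- The pair of distinct vertices `{u,v}` is a booster for `G`: adding the edge `uv` makes `G`
Hamiltonian or strictly increases the length of a longest path. -/
noncomputable def IsBooster {V : Type*} [Fintype V] (G : SimpleGraph V) (u v : V) : Prop :=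
  u ≠ v ∧ ((addEdge G u v).IsHamiltonian ∨ maxPathLen G < maxPathLen (addEdge G u v))

/-- The set of booster pairs of `G`. -/
noncomputable def boosterPairs {V : Type*} [Fintype V] (G : SimpleGraph V) :
    Finset (Sym2 V) :=
  Finset.univ.filter fun e => ∃ u v : V, e = s(u, v) ∧ IsBooster G u v


set_option linter.unusedSectionVars false
set_option linter.unusedVariables false



namespace BoosterAux

variable {V : Type*}

/-- `{a,b} = {u,v}` as unordered pairs. -/
def pairEq (a b u v : V) : Prop := (a = u ∧ b = v) ∨ (a = v ∧ b = u)

lemma pairEq_swap {a b u v : V} : pairEq a b u v ↔ pairEq b a u v := by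
  unfold pairEq; tauto

lemma pairEq_symm {a b u v : V} : pairEq a b u v ↔ pairEq a b v u := by
  unfold pairEq; tauto

/-- `u` and `v` are consecutive (in either order) in the list. -/
def lAdj : List V → V → V → Prop
  | [], _, _ => False
  | [_], _, _ => False
  | a :: b :: t, u, v => pairEq a b u v ∨ lAdj (b :: t) u v

@[simp] lemma lAdj_nil {u v : V} : ¬ lAdj [] u v := fun h => h

@[simp] lemma lAdj_single {a u v : V} : ¬ lAdj [a] u v := fun h => h

lemma lAdj_cons_cons {a b : V} {t : List V} {u v : V} :
    lAdj (a :: b :: t) u v ↔ pairEq a b u v ∨ lAdj (b :: t) u v := Iff.rfl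

lemma lAdj_symm {l : List V} {u v : V} : lAdj l u v ↔ lAdj l v u := by
  induction l with
  | nil => simp
  | cons a t ih =>
    cases t with
    | nil => simp
    | cons b t' =>
      rw [lAdj_cons_cons, lAdj_cons_cons, ih, pairEq_symm]

lemma mem_of_lAdj {l : List V} {u v : V} (h : lAdj l u v) : u ∈ l ∧ v ∈ l := by
  induction l with
  | nil => exact absurd h lAdj_nil
  | cons a t ih =>
    cases t with
    | nil => exact absurd h lAdj_single
    | cons b t' =>
      rcases h with hp | h
      · rcases hp with ⟨rfl, rfl⟩ | ⟨rfl, rfl⟩ <;> simp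
      · obtain ⟨hu, hv⟩ := ih h
        exact ⟨List.mem_cons_of_mem _ hu, List.mem_cons_of_mem _ hv⟩

lemma lAdj_cons_of_lAdj {l : List V} {c u v : V} (h : lAdj l u v) : lAdj (c :: l) u v := by
  cases l with
  | nil => exact absurd h lAdj_nil
  | cons b t' =>
    cases t' with
    | nil => exact absurd h lAdj_single
    | cons d t'' => exact Or.inr h

/-- unfolding `lAdj` on a cons with nonempty tail, via `head?`. -/
lemma lAdj_cons' {l : List V} {c u v : V} :
    lAdj (c :: l) u v ↔ (∃ h, l.head? = some h ∧ pairEq c h u v) ∨ lAdj l u v := by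
  cases l with
  | nil => simp
  | cons b t =>
    rw [lAdj_cons_cons]
    simp only [List.head?_cons, Option.some.injEq]
    constructor
    · rintro (hp | h)
      · exact Or.inl ⟨b, rfl, hp⟩
      · exact Or.inr h
    · rintro (⟨h, rfl, hp⟩ | h)
      · exact Or.inl hp
      · exact Or.inr h

lemma lAdj_append_cons (a : List V) (w : V) (t : List V) {u v : V} :
    lAdj (a ++ w :: t) u v ↔ lAdj (a ++ [w]) u v ∨ lAdj (w :: t) u v := by
  induction a with
  | nil => simp
  | cons c a' ih =>
    rw [List.cons_append, List.cons_append, lAdj_cons', lAdj_cons', ih]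
    have hh : (a' ++ w :: t).head? = (a' ++ [w]).head? := by
      cases a' <;> simp
    rw [hh]
    exact or_assoc.symm

lemma lAdj_concat (s : List V) (a : V) {u v : V} :
    lAdj (s ++ [a]) u v ↔ lAdj s u v ∨ (∃ p, s.getLast? = some p ∧ pairEq p a u v) := by
  induction s with
  | nil => simp
  | cons c s' ih =>
    cases s' with
    | nil => simp [lAdj_cons_cons]
    | cons d s'' =>
      have e1 : (c :: d :: s'') ++ [a] = c :: ((d :: s'') ++ [a]) := rfl
      rw [e1, lAdj_cons', ih, lAdj_cons_cons]
      have e2 : ((d :: s'') ++ [a]).head? = some d := rfl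
      have e3 : (c :: d :: s'').getLast? = (d :: s'').getLast? := by
        simp [List.getLast?_cons_cons]
      rw [e2, e3]
      simp only [Option.some.injEq]
      constructor
      · rintro (⟨h, rfl, hp⟩ | (h | h))
        · exact Or.inl (Or.inl hp)
        · exact Or.inl (Or.inr h)
        · exact Or.inr h
      · rintro ((hp | h) | h)
        · exact Or.inl ⟨d, rfl, hp⟩
        · exact Or.inr (Or.inl h)
        · exact Or.inr (Or.inr h)

lemma lAdj_reverse {l : List V} {u v : V} : lAdj l.reverse u v ↔ lAdj l u v := by
  induction l with
  | nil => simp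
  | cons c t ih =>
    rw [List.reverse_cons, lAdj_concat, lAdj_cons', ih, List.getLast?_reverse]
    constructor
    · rintro (h | ⟨p, hp, hpe⟩)
      · exact Or.inr h
      · exact Or.inl ⟨p, hp, pairEq_swap.1 hpe⟩
    · rintro (⟨h, hh, hpe⟩ | h)
      · exact Or.inr ⟨h, hh, pairEq_swap.1 hpe⟩
      · exact Or.inl h

lemma rel_of_lAdj {R : V → V → Prop} {l : List V} {u v : V}
    (hc : l.Chain' R) (h : lAdj l u v) : R u v ∨ R v u := by
  induction l with
  | nil => exact absurd h lAdj_nil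
  | cons a t ih =>
    cases t with
    | nil => exact absurd h lAdj_single
    | cons b t' =>
      simp only [List.Chain', List.isChain_cons_cons] at hc
      rcases h with hp | h
      · rcases hp with ⟨rfl, rfl⟩ | ⟨rfl, rfl⟩
        · exact Or.inl hc.1
        · exact Or.inr hc.1
      · exact ih hc.2 h

lemma lAdj_head {t : List V} {y v : V} (hy : y ∉ t) :
    lAdj (y :: t) y v ↔ t.head? = some v := by
  cases t with
  | nil => simp
  | cons b t' =>
    rw [lAdj_cons_cons]
    simp only [List.head?_cons, Option.some.injEq]
    constructor
    · rintro (hp | h)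
      · rcases hp with ⟨-, rfl⟩ | ⟨rfl, hb⟩
        · rfl
        · exact absurd (hb ▸ List.mem_cons_self (a := b) (l := t')) hy
      · exact absurd (mem_of_lAdj h).1 hy
    · rintro rfl
      exact Or.inl (Or.inl ⟨rfl, rfl⟩)

/-- In a nodup list, a vertex decomposition characterises its list-neighbours. -/
lemma lAdj_eq_of_nodup {s t : List V} {y v : V} (hnd : (s ++ y :: t).Nodup) :
    lAdj (s ++ y :: t) y v ↔ t.head? = some v ∨ s.getLast? = some v := by
  have hys : y ∉ s := by
    intro hy
    exact (List.disjoint_of_nodup_append hnd) hy List.mem_cons_self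
  have hyt : y ∉ t := by
    have := (List.nodup_append.1 hnd).2.1
    simp only [List.nodup_cons] at this
    exact this.1
  rw [lAdj_append_cons, lAdj_head hyt]
  constructor
  · rintro (h | h)
    · right
      -- lAdj (s ++ [y]) y v : reverse it
      rw [← lAdj_reverse, List.reverse_append, List.reverse_cons, List.reverse_nil,
        List.nil_append, List.singleton_append, lAdj_head (by simpa using hys)] at h
      rwa [List.head?_reverse] at h
    · exact Or.inl h
  · rintro (h | h)
    · exact Or.inr h
    · left
      rw [← lAdj_reverse, List.reverse_append, List.reverse_cons, List.reverse_nil,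
        List.nil_append, List.singleton_append, lAdj_head (by simpa using hys),
        List.head?_reverse]
      exact h

end BoosterAux

namespace BoosterAux
variable {V : Type*}
open scoped Classical
open SimpleGraph

/-- The Pósa rotation closure of a base path-list `l0`. -/
inductive RotCl (G : SimpleGraph V) (l0 : List V) : List V → Prop
  | refl : RotCl G l0 l0
  | rot {l : List V} (a : List V) (w z : V) (b : List V) (x : V)
      (h : RotCl G l0 l) (hl : l = a ++ w :: z :: b)
      (hx : l.getLast? = some x) (hadj : G.Adj x w) :
      RotCl G l0 (a ++ w :: (z :: b).reverse)

variable {G : SimpleGraph V} {l0 l : List V}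

lemma RotCl.perm (h : RotCl G l0 l) : l.Perm l0 := by
  induction h with
  | refl => exact List.Perm.refl _
  | rot a w z b x h hl hx hadj ih =>
    exact (List.Perm.append_left a ((List.reverse_perm _).cons w)).trans (hl ▸ ih)

lemma RotCl.head?_eq (h : RotCl G l0 l) : l.head? = l0.head? := by
  induction h with
  | refl => rfl
  | rot a w z b x h hl hx hadj ih =>
    rw [← ih, hl]
    cases a <;> simp

lemma rot_getLast? (a : List V) (w z : V) (b : List V) :
    (a ++ w :: (z :: b).reverse).getLast? = some z := by
  have h : a ++ w :: (z :: b).reverse = (a ++ w :: b.reverse) ++ [z] := by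
    simp [List.reverse_cons]
  rw [h, List.getLast?_concat]

lemma getLast?_decomp (a : List V) (w z : V) (b : List V) :
    (a ++ w :: z :: b).getLast? = (z :: b).getLast? := by
  rw [List.getLast?_append_cons, List.getLast?_cons_cons]

lemma RotCl.chain' (hc : l0.Chain' G.Adj) (h : RotCl G l0 l) : l.Chain' G.Adj := by
  induction h with
  | refl => exact hc
  | rot a w z b x h hl hx hadj ih =>
    subst hl
    have hflip : (flip G.Adj) = G.Adj := by
      funext u v
      exact propext (G.adj_comm v u)
    rw [show a ++ w :: (z :: b).reverse = (a ++ [w]) ++ (z :: b).reverse by simp]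
    refine List.isChain_append.2 ⟨?_, ?_, ?_⟩
    · exact ih.prefix ⟨z :: b, by simp⟩
    · rw [List.isChain_reverse, show (fun a b => G.Adj b a) = G.Adj from hflip]
      exact ih.suffix ⟨a ++ [w], by simp⟩
    · intro p hp q hq
      rw [Option.mem_def, List.getLast?_concat, Option.some.injEq] at hp
      rw [Option.mem_def, List.head?_reverse] at hq
      rw [getLast?_decomp, hq, Option.some.injEq] at hx
      subst hp hx
      exact hadj.symm

variable [Fintype V]

noncomputable def rotEnds (G : SimpleGraph V) (l0 : List V) : Finset V :=
  Finset.univ.filter fun x => ∃ l, RotCl G l0 l ∧ l.getLast? = some x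

lemma mem_rotEnds {x : V} :
    x ∈ rotEnds G l0 ↔ ∃ l, RotCl G l0 l ∧ l.getLast? = some x := by
  simp [rotEnds]

/-- `y` is "good" if neither it nor any of its `l0`-neighbours is a rotation endpoint. -/
def Good (G : SimpleGraph V) (l0 : List V) (y : V) : Prop :=
  y ∉ rotEnds G l0 ∧ ∀ v, lAdj l0 y v → v ∉ rotEnds G l0

lemma lAdj_rot {a : List V} {w z : V} {b : List V} {x y v : V}
    (hx : (z :: b).getLast? = some x) (hyw : y ≠ w) (hyz : y ≠ z) (hyx : y ≠ x) :
    lAdj (a ++ w :: (z :: b).reverse) y v ↔ lAdj (a ++ w :: z :: b) y v := by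
  obtain ⟨r, rest, hr⟩ : ∃ r rest, (z :: b).reverse = r :: rest :=
    List.exists_cons_of_ne_nil (by simp)
  have hrx : r = x := by
    have h2 := List.head?_reverse (l := z :: b)
    rw [hr, hx] at h2
    exact Option.some_injective _ h2
  rw [hrx] at hr
  rw [hr, lAdj_append_cons a w (x :: rest), lAdj_append_cons a w (z :: b)]
  have e1 : lAdj (x :: rest) y v ↔ lAdj (z :: b) y v := by
    rw [← hr, lAdj_reverse]
  have e2 : lAdj (w :: x :: rest) y v ↔ lAdj (x :: rest) y v := by
    rw [lAdj_cons']
    constructor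
    · rintro (⟨h, hh, hp⟩ | h)
      · exfalso
        simp only [List.head?_cons, Option.some.injEq] at hh
        subst hh
        rcases hp with ⟨h1, h2⟩ | ⟨h1, h2⟩
        · exact hyw h1.symm
        · exact hyx h2.symm
      · exact h
    · exact fun h => Or.inr h
  have e3 : lAdj (w :: z :: b) y v ↔ lAdj (z :: b) y v := by
    rw [lAdj_cons']
    constructor
    · rintro (⟨h, hh, hp⟩ | h)
      · exfalso
        simp only [List.head?_cons, Option.some.injEq] at hh
        subst hh
        rcases hp with ⟨h1, h2⟩ | ⟨h1, h2⟩
        · exact hyw h1.symm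
        · exact hyz h2.symm
      · exact h
    · exact fun h => Or.inr h
  rw [e2, e1, e3]

lemma RotCl.last_mem_rotEnds {x : V} (h : RotCl G l0 l) (hx : l.getLast? = some x) :
    x ∈ rotEnds G l0 :=
  mem_rotEnds.2 ⟨l, h, hx⟩

/-- The key invariant: for a good vertex, list-adjacency is preserved by rotations. -/
lemma RotCl.lAdj_inv (h : RotCl G l0 l) :
    ∀ y v : V, Good G l0 y → (lAdj l y v ↔ lAdj l0 y v) := by
  induction h with
  | refl => exact fun _ _ _ => Iff.rfl
  | rot a w z b x h hl hx hadj ih =>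
    intro y v hy
    have hz : z ∈ rotEnds G l0 :=
      (RotCl.rot a w z b x h hl hx hadj).last_mem_rotEnds (rot_getLast? a w z b)
    have hxe : x ∈ rotEnds G l0 := h.last_mem_rotEnds hx
    subst hl
    have hwz : lAdj (a ++ w :: z :: b) w z := by
      rw [lAdj_append_cons]
      exact Or.inr (Or.inl (Or.inl ⟨rfl, rfl⟩))
    have hyw : y ≠ w := by
      rintro rfl
      exact hy.2 z ((ih y z hy).1 hwz) hz
    have hyz : y ≠ z := fun hyz => hy.1 (hyz ▸ hz)
    have hyx : y ≠ x := fun hyx => hy.1 (hyx ▸ hxe)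
    have hx' : (z :: b).getLast? = some x := by
      rw [getLast?_decomp] at hx
      exact hx
    rw [lAdj_rot hx' hyw hyz hyx]
    exact ih y v hy

end BoosterAux

namespace BoosterAux
open SimpleGraph
variable {V : Type*} [Fintype V]

lemma walk_of_chain' (H : SimpleGraph V) : ∀ (a : V) (t : List V), (a :: t).Chain' H.Adj →
    ∃ (v : V) (w : H.Walk a v), w.support = a :: t := by
  intro a t
  induction t generalizing a with
  | nil => exact fun _ => ⟨a, SimpleGraph.Walk.nil, rfl⟩
  | cons b t' ih =>
    intro hc
    simp only [List.Chain', List.isChain_cons_cons] at hc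
    obtain ⟨v, w, hw⟩ := ih b hc.2
    exact ⟨v, SimpleGraph.Walk.cons hc.1 w, by simp [hw]⟩

lemma maxPathLen_bddAbove (H : SimpleGraph V) :
    BddAbove {n | ∃ (u v : V) (w : H.Walk u v), w.IsPath ∧ w.length = n} := by
  refine ⟨Fintype.card V, ?_⟩
  rintro n ⟨u, v, w, hw, rfl⟩
  exact le_of_lt hw.length_lt

lemma length_le_maxPathLen {H : SimpleGraph V} {u v : V} {w : H.Walk u v} (hw : w.IsPath) :
    w.length ≤ maxPathLen H :=
  le_csSup (maxPathLen_bddAbove H) ⟨u, v, w, hw, rfl⟩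

lemma exists_maxPathLen (H : SimpleGraph V) [Nonempty V] :
    ∃ (u v : V) (w : H.Walk u v), w.IsPath ∧ w.length = maxPathLen H := by
  have hne : {n | ∃ (u v : V) (w : H.Walk u v), w.IsPath ∧ w.length = n}.Nonempty := by
    obtain ⟨u⟩ := ‹Nonempty V›
    exact ⟨0, u, u, SimpleGraph.Walk.nil, SimpleGraph.Walk.IsPath.nil, rfl⟩
  exact Nat.sSup_mem hne (maxPathLen_bddAbove H)

/-- a longest path, as a list of vertices -/
def LongestList (G : SimpleGraph V) (l : List V) : Prop :=
  l.Chain' G.Adj ∧ l.Nodup ∧ l.length = maxPathLen G + 1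

lemma exists_longestList (G : SimpleGraph V) [Nonempty V] : ∃ l, LongestList G l := by
  obtain ⟨u, v, w, hw, hlen⟩ := exists_maxPathLen G
  exact ⟨w.support, w.isChain_adj_support, hw.support_nodup,
    by rw [SimpleGraph.Walk.length_support, hlen]⟩

lemma LongestList.length_le {G : SimpleGraph V} {l : List V} (hc : l.Chain' G.Adj)
    (hnd : l.Nodup) (hne : l ≠ []) : l.length ≤ maxPathLen G + 1 := by
  obtain ⟨a, t, rfl⟩ := List.exists_cons_of_ne_nil hne
  obtain ⟨v, w, hw⟩ := walk_of_chain' G a t hc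
  have hp : w.IsPath := SimpleGraph.Walk.IsPath.mk' (hw ▸ hnd)
  have := length_le_maxPathLen hp
  have h2 := SimpleGraph.Walk.length_support w
  rw [hw] at h2
  omega

lemma LongestList.rotCl {G : SimpleGraph V} {l0 l : List V} (hL : LongestList G l0)
    (h : RotCl G l0 l) : LongestList G l :=
  ⟨h.chain' hL.1, h.perm.nodup_iff.2 hL.2.1, by rw [h.perm.length_eq]; exact hL.2.2⟩

/-- maximality: every neighbour of the endpoint of a longest path lies on it -/
lemma LongestList.mem_of_adj_last {G : SimpleGraph V} {l : List V} {x y : V}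
    (hL : LongestList G l) (hx : l.getLast? = some x) (hadj : G.Adj x y) : y ∈ l := by
  by_contra hy
  have hne : l ≠ [] := by rintro rfl; simp at hx
  have hc : (l ++ [y]).Chain' G.Adj := by
    refine List.isChain_append.2 ⟨hL.1, List.isChain_singleton y, ?_⟩
    intro p hp q hq
    rw [Option.mem_def] at hp hq
    rw [hx, Option.some.injEq] at hp
    simp only [List.head?_cons, Option.some.injEq] at hq
    exact hp ▸ hq ▸ hadj
  have hnd : (l ++ [y]).Nodup := by
    rw [List.nodup_append]
    exact ⟨hL.2.1, List.nodup_singleton y, by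
      intro a ha b hb hab; rw [List.mem_singleton] at hb; rw [hab, hb] at ha; exact hy ha⟩
  have := LongestList.length_le hc hnd (by simp)
  rw [List.length_append, List.length_singleton, hL.2.2] at this
  omega

lemma option_toFinset_card_le (o : Option V) : o.toFinset.card ≤ 1 := by
  cases o <;> simp

noncomputable def pNbrs (l0 : List V) (r : V) : Finset V :=
  Finset.univ.filter fun v => lAdj l0 r v

lemma extNbhd_rotEnds_subset {G : SimpleGraph V} {l0 : List V} (hL : LongestList G l0) :
    extNbhd G (rotEnds G l0) ⊆ (rotEnds G l0).biUnion (pNbrs l0) := by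
  intro y hy
  rw [extNbhd, Finset.mem_filter] at hy
  obtain ⟨-, hyR, u, huR, hadj⟩ := hy
  by_contra hyB
  have hgood : Good G l0 y := by
    refine ⟨hyR, fun v hv hvR => hyB ?_⟩
    refine Finset.mem_biUnion.2 ⟨v, hvR, ?_⟩
    rw [pNbrs, Finset.mem_filter]
    exact ⟨Finset.mem_univ _, lAdj_symm.1 hv⟩
  obtain ⟨l, hcl, hlast⟩ := mem_rotEnds.1 huR
  have hLl : LongestList G l := hL.rotCl hcl
  have hymem : y ∈ l := hLl.mem_of_adj_last hlast hadj
  obtain ⟨s, t, hst⟩ := List.append_of_mem hymem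
  have hyu : y ≠ u := fun h => hyR (h ▸ huR)
  have ht : t ≠ [] := by
    rintro rfl
    rw [hst, List.getLast?_concat] at hlast
    exact hyu (Option.some_injective _ hlast)
  obtain ⟨z, b, rfl⟩ := List.exists_cons_of_ne_nil ht
  have hrot : RotCl G l0 (s ++ y :: (z :: b).reverse) :=
    RotCl.rot s y z b u hcl hst hlast hadj
  have hz : z ∈ rotEnds G l0 := hrot.last_mem_rotEnds (rot_getLast? s y z b)
  have hyz : lAdj l y z := by
    rw [hst, lAdj_append_cons]
    exact Or.inr (Or.inl (Or.inl ⟨rfl, rfl⟩))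
  exact hgood.2 z ((hcl.lAdj_inv y z hgood).1 hyz) hz

lemma card_pNbrs_le {l0 : List V} (hnd : l0.Nodup) (r : V) : (pNbrs l0 r).card ≤ 2 := by
  by_cases hr : r ∈ l0
  · obtain ⟨s, t, rfl⟩ := List.append_of_mem hr
    have hsub : pNbrs (s ++ r :: t) r ⊆ t.head?.toFinset ∪ s.getLast?.toFinset := by
      intro v hv
      rw [pNbrs, Finset.mem_filter] at hv
      rcases (lAdj_eq_of_nodup hnd).1 hv.2 with h | h
      · exact Finset.mem_union_left _ (by simp [h])
      · exact Finset.mem_union_right _ (by simp [h])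
    calc (pNbrs (s ++ r :: t) r).card ≤ _ := Finset.card_le_card hsub
      _ ≤ t.head?.toFinset.card + s.getLast?.toFinset.card := Finset.card_union_le _ _
      _ ≤ 2 := by
          have h1 := option_toFinset_card_le t.head?
          have h2 := option_toFinset_card_le s.getLast?
          omega
  · have : pNbrs l0 r = ∅ := by
      rw [Finset.eq_empty_iff_forall_notMem]
      intro v hv
      rw [pNbrs, Finset.mem_filter] at hv
      exact hr (mem_of_lAdj hv.2).1
    simp [this]

lemma card_pNbrs_last_le {l0 : List V} {x : V} (hnd : l0.Nodup)
    (hx : l0.getLast? = some x) : (pNbrs l0 x).card ≤ 1 := by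
  have hne : l0 ≠ [] := by rintro rfl; simp at hx
  have hdecomp : l0 = l0.dropLast ++ [x] := by
    conv_lhs => rw [← List.dropLast_append_getLast hne]
    rw [List.getLast?_eq_getLast hne, Option.some.injEq] at hx
    rw [hx]
  rw [hdecomp] at hnd ⊢
  have hsub : pNbrs (l0.dropLast ++ [x]) x ⊆ l0.dropLast.getLast?.toFinset := by
    intro v hv
    rw [pNbrs, Finset.mem_filter] at hv
    rcases (lAdj_eq_of_nodup (s := l0.dropLast) (t := []) hnd).1 hv.2 with h | h
    · simp at h
    · simp [h]
  exact le_trans (Finset.card_le_card hsub) (option_toFinset_card_le _)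

end BoosterAux

namespace BoosterAux
open SimpleGraph
variable {V : Type*} [Fintype V] {G : SimpleGraph V} {d : ℝ} {k m M n : ℕ}

lemma rotEnds_card_lower (hd : 2 ≤ d) (hkm : m ≤ k + 1) (hm : 1 ≤ m)
    (hMn : (M : ℝ) ≤ (n : ℝ) / 4) (hn : Fintype.card V = n)
    (hexp : IsExpander G k d) (hj : IsJoined G m M)
    {l0 : List V} (hL : LongestList G l0) :
    (n : ℝ) / 4 ≤ ((rotEnds G l0).card : ℝ) ∧ m ≤ (rotEnds G l0).card := by
  set R := rotEnds G l0 with hR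
  have hne : l0 ≠ [] := by
    intro h
    have := hL.2.2
    rw [h] at this
    simp at this
  obtain ⟨x0, hx0⟩ : ∃ x0, l0.getLast? = some x0 :=
    ⟨l0.getLast hne, List.getLast?_eq_getLast hne⟩
  have hx0R : x0 ∈ R := RotCl.refl.last_mem_rotEnds hx0
  have hRne : R.Nonempty := ⟨x0, hx0R⟩
  have hcard1 : (extNbhd G R).card + 1 ≤ 2 * R.card := by
    have h1 : (extNbhd G R).card ≤ ∑ r ∈ R, (pNbrs l0 r).card :=
      le_trans (Finset.card_le_card (extNbhd_rotEnds_subset hL)) (Finset.card_biUnion_le)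
    have h2 : (pNbrs l0 x0).card + ∑ r ∈ R.erase x0, (pNbrs l0 r).card
        = ∑ r ∈ R, (pNbrs l0 r).card := Finset.add_sum_erase R (fun r => (pNbrs l0 r).card) hx0R
    have h3 : ∑ r ∈ R.erase x0, (pNbrs l0 r).card ≤ 2 * (R.erase x0).card := by
      calc ∑ r ∈ R.erase x0, (pNbrs l0 r).card ≤ ∑ _r ∈ R.erase x0, 2 :=
            Finset.sum_le_sum fun r _ => card_pNbrs_le hL.2.1 r
        _ = 2 * (R.erase x0).card := by rw [Finset.sum_const, smul_eq_mul, mul_comm]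
    have h4 : (pNbrs l0 x0).card ≤ 1 := card_pNbrs_last_le hL.2.1 hx0
    have h5 : (R.erase x0).card = R.card - 1 := Finset.card_erase_of_mem hx0R
    have h6 : 1 ≤ R.card := Finset.card_pos.2 hRne
    omega
  have hkR : k + 1 ≤ R.card := by
    by_contra h
    push_neg at h
    have hle : (R.card : ℝ) ≤ k := by
      exact_mod_cast Nat.le_of_lt_succ h
    have hexpR := hexp R hRne hle
    have h2c : (2 : ℝ) * R.card ≤ d * R.card :=
      mul_le_mul_of_nonneg_right hd (by positivity)
    have hc1 : ((extNbhd G R).card : ℝ) + 1 ≤ 2 * R.card := by exact_mod_cast hcard1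
    have hcpos : (1 : ℝ) ≤ R.card := by exact_mod_cast Finset.card_pos.2 hRne
    linarith
  have hmR : m ≤ R.card := le_trans hkm hkR
  set rest := Finset.univ \ (R ∪ extNbhd G R) with hrestdef
  have hrest : rest.card + 1 ≤ M := by
    by_contra h
    push_neg at h
    obtain ⟨B, hBsub, hB⟩ := Finset.exists_subset_card_eq (s := rest) (n := M) (by omega)
    obtain ⟨A, hAsub, hA⟩ := Finset.exists_subset_card_eq (s := R) (n := m) hmR
    have hdisj : Disjoint A B := by
      rw [Finset.disjoint_left]
      intro a haA haB
      have h1 : a ∈ R := hAsub haA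
      have h2 := hBsub haB
      rw [hrestdef, Finset.mem_sdiff] at h2
      exact h2.2 (Finset.mem_union_left _ h1)
    obtain ⟨a, haA, b, hbB, hab⟩ := hj A B hdisj hA hB
    have hbrest := hBsub hbB
    rw [hrestdef, Finset.mem_sdiff] at hbrest
    apply hbrest.2
    refine Finset.mem_union_right _ ?_
    rw [extNbhd, Finset.mem_filter]
    exact ⟨Finset.mem_univ _, fun hbR => hbrest.2 (Finset.mem_union_left _ hbR),
      a, hAsub haA, hab⟩
  have htot : n ≤ R.card + (extNbhd G R).card + rest.card := by
    have huniv : (R ∪ extNbhd G R) ∪ rest = Finset.univ :=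
      Finset.union_sdiff_of_subset (Finset.subset_univ _)
    have h1 : Fintype.card V ≤ (R ∪ extNbhd G R).card + rest.card := by
      rw [← Finset.card_univ, ← huniv]
      exact Finset.card_union_le _ _
    have h2 := Finset.card_union_le R (extNbhd G R)
    omega
  refine ⟨?_, hmR⟩
  have c1 : (n : ℝ) ≤ R.card + (extNbhd G R).card + rest.card := by exact_mod_cast htot
  have c2 : ((extNbhd G R).card : ℝ) + 1 ≤ 2 * R.card := by exact_mod_cast hcard1
  have c3 : (rest.card : ℝ) + 1 ≤ M := by exact_mod_cast hrest
  linarith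

end BoosterAux

namespace BoosterAux
open SimpleGraph
variable {V : Type*} [Fintype V] {G : SimpleGraph V} {d : ℝ} {k m M n : ℕ}

lemma lAdj_cons_cons' {a b : V} {t : List V} {u v : V} :
    lAdj (a :: b :: t) u v ↔ pairEq a b u v ∨ lAdj (b :: t) u v := Iff.rfl

lemma lAdj_of_mem_edges {H : SimpleGraph V} {u v a b : V} (w : H.Walk u v)
    (h : s(a, b) ∈ w.edges) : lAdj w.support a b := by
  induction w with
  | nil => simp at h
  | @cons x y z hadj w ih =>
    rw [SimpleGraph.Walk.edges_cons, List.mem_cons] at h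
    rcases h with h | h
    · rw [SimpleGraph.Walk.support_cons, w.support_eq_cons, lAdj_cons_cons']
      rw [Sym2.eq_iff] at h
      rcases h with ⟨rfl, rfl⟩ | ⟨rfl, rfl⟩
      · exact Or.inl (Or.inl ⟨rfl, rfl⟩)
      · exact Or.inl (Or.inr ⟨rfl, rfl⟩)
    · rw [SimpleGraph.Walk.support_cons]
      exact lAdj_cons_of_lAdj (ih h)

lemma addEdge_adj {u v a b : V} (h : G.Adj a b) : (addEdge G u v).Adj a b :=
  Or.inl h

lemma addEdge_flip (u v : V) : flip (addEdge G u v).Adj = (addEdge G u v).Adj := by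
  funext a b
  exact propext ((addEdge G u v).adj_comm b a)

lemma isBooster_of_longest (hd : 2 ≤ d) (hkm : m ≤ k + 1) (hm : 1 ≤ m)
    (hmM : m ≤ M) (hMn : (M : ℝ) ≤ (n : ℝ) / 4) (hn4 : 4 ≤ n)
    (hn : Fintype.card V = n)
    (hexp : IsExpander G k d) (hj : IsJoined G m M)
    {l : List V} (hL : LongestList G l) {r s : V}
    (hr : l.head? = some r) (hs : l.getLast? = some s) : IsBooster G r s := by
  have hmn : m + M ≤ n := by
    have h1 : (m : ℝ) ≤ M := by exact_mod_cast hmM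
    have h2 : (m : ℝ) + M ≤ n := by linarith
    exact_mod_cast h2
  -- G has an edge, so maxPathLen is at least 1
  have hedge : 1 ≤ maxPathLen G := by
    obtain ⟨A, -, hA⟩ := Finset.exists_subset_card_eq
      (s := (Finset.univ : Finset V)) (n := m) (by rw [Finset.card_univ, hn]; omega)
    obtain ⟨B, hBsub, hB⟩ := Finset.exists_subset_card_eq
      (s := Finset.univ \ A) (n := M)
      (by rw [Finset.card_sdiff_of_subset (Finset.subset_univ A), Finset.card_univ, hn, hA]; omega)
    have hdisj : Disjoint A B := by
      rw [Finset.disjoint_right]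
      intro b hbB hbA
      have h3 := hBsub hbB
      rw [Finset.mem_sdiff] at h3
      exact h3.2 hbA
    obtain ⟨a, -, b, -, hab⟩ := hj A B hdisj hA hB
    have hw : ((SimpleGraph.Walk.cons hab SimpleGraph.Walk.nil) : G.Walk a b).IsPath := by
      refine SimpleGraph.Walk.IsPath.mk' ?_
      simp [hab.ne]
    exact length_le_maxPathLen hw
  have hlen2 : 2 ≤ l.length := by rw [hL.2.2]; omega
  obtain ⟨t, rfl⟩ : ∃ t, l = r :: t := by
    cases l with
    | nil => simp at hr
    | cons a t =>
      have : a = r := by simpa using hr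
      exact ⟨t, by rw [this]⟩
  have ht : t ≠ [] := by rintro rfl; simp at hlen2
  have hts : t.getLast? = some s := by
    obtain ⟨b0, t', rfl⟩ := List.exists_cons_of_ne_nil ht
    rwa [List.getLast?_cons_cons] at hs
  have hst : s ∈ t := List.mem_of_mem_getLast? hts
  have hrt : r ∉ t := (List.nodup_cons.1 hL.2.1).1
  have hrs : r ≠ s := fun h => hrt (h ▸ hst)
  have hars : (addEdge G r s).Adj r s := by
    right
    rw [SimpleGraph.fromEdgeSet_adj]
    exact ⟨Set.mem_singleton _, hrs⟩
  have hasr : (addEdge G r s).Adj s r := hars.symm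
  have hchainA : (r :: t).Chain' (addEdge G r s).Adj :=
    hL.1.imp fun _ _ h => addEdge_adj h
  by_cases hall : (r :: t).length = n
  -- Hamiltonian case
  · have hfin : (r :: t).toFinset = Finset.univ := by
      apply Finset.eq_univ_of_card
      rw [List.toFinset_card_of_nodup hL.2.1, hall, hn]
    have huniv : ∀ a : V, a ∈ (r :: t) := by
      intro a
      have h3 : a ∈ (r :: t).toFinset := by rw [hfin]; exact Finset.mem_univ a
      simpa using h3
    have hchainR : (r :: t).reverse.Chain' (addEdge G r s).Adj := by
      simp only [List.Chain', List.isChain_reverse]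
      rw [show (fun a b => (addEdge G r s).Adj b a) = (addEdge G r s).Adj from addEdge_flip r s]
      exact hchainA
    obtain ⟨s', t0, hrev⟩ : ∃ s' t0, (r :: t).reverse = s' :: t0 :=
      List.exists_cons_of_ne_nil (by simp)
    have hs' : s' = s := by
      have h1 : (r :: t).reverse.head? = some s := by
        rw [List.head?_reverse]; exact hs
      rw [hrev] at h1
      simpa using h1
    rw [hs'] at hrev
    obtain ⟨v, wk0, hsupp0⟩ := walk_of_chain' (addEdge G r s) s t0 (hrev ▸ hchainR)
    rw [← hrev] at hsupp0
    have hv : v = r := by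
      have h1 : wk0.support.getLast? = some v := by
        rw [List.getLast?_eq_getLast wk0.support_ne_nil]
        simp
      rw [hsupp0, List.getLast?_reverse, hr] at h1
      simpa using h1.symm
    have hsupp : (wk0.copy rfl hv).support = (r :: t).reverse := by
      rw [SimpleGraph.Walk.support_copy, hsupp0]
    set wk : (addEdge G r s).Walk s r := wk0.copy rfl hv with hwk
    have hnodupR : (r :: t).reverse.Nodup := by
      rw [List.nodup_reverse]; exact hL.2.1
    have hpath : wk.IsPath := SimpleGraph.Walk.IsPath.mk' (hsupp ▸ hnodupR)
    have hedges : s(r, s) ∉ wk.edges := by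
      intro hmem
      have h1 : lAdj wk.support r s := lAdj_of_mem_edges wk hmem
      rw [hsupp, lAdj_reverse, lAdj_head hrt] at h1
      -- h1 : t.head? = some s
      obtain ⟨b0, t', rfl⟩ := List.exists_cons_of_ne_nil ht
      have hb0 : b0 = s := by simpa using h1
      have hsnotin : b0 ∉ t' := by
        have h4 := hL.2.1
        rw [List.nodup_cons, List.nodup_cons] at h4
        exact h4.2.1
      cases t' with
      | nil =>
        simp at hall
        omega
      | cons c t'' =>
        rw [List.getLast?_cons_cons] at hts
        refine hsnotin ?_
        rw [hb0]
        exact List.mem_of_mem_getLast? hts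
    have hcyc : (SimpleGraph.Walk.cons hars wk).IsCycle :=
      (SimpleGraph.Walk.cons_isCycle_iff wk hars).2 ⟨hpath, hedges⟩
    have hham : (SimpleGraph.Walk.cons hars wk).IsHamiltonianCycle := by
      rw [SimpleGraph.Walk.isHamiltonianCycle_iff_isCycle_and_support_count_tail_eq_one]
      refine ⟨hcyc, fun a => ?_⟩
      rw [SimpleGraph.Walk.support_cons, List.tail_cons, hsupp]
      exact List.count_eq_one_of_mem hnodupR (by rw [List.mem_reverse]; exact huniv a)
    exact ⟨hrs, Or.inl fun _ => ⟨r, SimpleGraph.Walk.cons hars wk, hham⟩⟩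
  -- longer-path case
  · have hlcard : (r :: t).toFinset.card = (r :: t).length :=
      List.toFinset_card_of_nodup hL.2.1
    have hlle : (r :: t).length ≤ n := by
      rw [← hlcard, ← hn, ← Finset.card_univ]
      exact Finset.card_le_univ _
    have hllt : (r :: t).length < n := lt_of_le_of_ne hlle hall
    have hRsub : rotEnds G (r :: t) ⊆ (r :: t).toFinset := by
      intro x hx
      obtain ⟨l', hcl, hlast⟩ := mem_rotEnds.1 hx
      rw [List.mem_toFinset]
      exact hcl.perm.subset (List.mem_of_mem_getLast? hlast)
    have hMl : M ≤ (r :: t).length := by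
      have h1 := (rotEnds_card_lower hd hkm hm hMn hn hexp hj hL).1
      have h2 : (rotEnds G (r :: t)).card ≤ (r :: t).toFinset.card :=
        Finset.card_le_card hRsub
      have h3 : ((rotEnds G (r :: t)).card : ℝ) ≤ ((r :: t).length : ℝ) := by
        rw [← hlcard]; exact_mod_cast h2
      have h4 : (M : ℝ) ≤ ((r :: t).length : ℝ) := by linarith
      exact_mod_cast h4
    obtain ⟨u0, w0, hu0l, hw0l, hadj0⟩ :
        ∃ u0 w0, u0 ∈ (r :: t) ∧ w0 ∉ (r :: t) ∧ G.Adj u0 w0 := by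
      by_cases hcm : m ≤ (Finset.univ \ (r :: t).toFinset).card
      · obtain ⟨A, hAsub, hA⟩ := Finset.exists_subset_card_eq
          (s := Finset.univ \ (r :: t).toFinset) (n := m) hcm
        obtain ⟨B, hBsub, hB⟩ := Finset.exists_subset_card_eq
          (s := (r :: t).toFinset) (n := M) (by rw [hlcard]; exact hMl)
        have hdisj : Disjoint A B := by
          rw [Finset.disjoint_left]
          intro a haA haB
          have h1 := hAsub haA
          rw [Finset.mem_sdiff] at h1
          exact h1.2 (hBsub haB)
        obtain ⟨a, haA, b, hbB, hab⟩ := hj A B hdisj hA hB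
        refine ⟨b, a, ?_, ?_, hab.symm⟩
        · have h5 := hBsub hbB; rwa [List.mem_toFinset] at h5
        · have h1 := hAsub haA
          rw [Finset.mem_sdiff, List.mem_toFinset] at h1
          exact h1.2
      · push_neg at hcm
        have hTne : (Finset.univ \ (r :: t).toFinset).Nonempty := by
          rw [← Finset.card_pos, Finset.card_sdiff_of_subset (Finset.subset_univ _),
            Finset.card_univ, hn, hlcard]
          omega
        have hTk : (((Finset.univ \ (r :: t).toFinset).card : ℕ) : ℝ) ≤ k := by
          have h5 : (Finset.univ \ (r :: t).toFinset).card ≤ k := by omega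
          exact_mod_cast h5
        have hexpT := hexp _ hTne hTk
        have hTpos : (1 : ℝ) ≤ ((Finset.univ \ (r :: t).toFinset).card : ℝ) := by
          exact_mod_cast Finset.card_pos.2 hTne
        have hNne : (extNbhd G (Finset.univ \ (r :: t).toFinset)).Nonempty := by
          rw [← Finset.card_pos]
          by_contra h
          push_neg at h
          have h0 : (extNbhd G (Finset.univ \ (r :: t).toFinset)).card = 0 := by omega
          rw [h0] at hexpT
          push_cast at hexpT
          nlinarith
        obtain ⟨y, hy⟩ := hNne
        rw [extNbhd, Finset.mem_filter] at hy
        obtain ⟨-, hyT, u, huT, huy⟩ := hy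
        have hyl : y ∈ (r :: t) := by
          by_contra hyl
          exact hyT (by rw [Finset.mem_sdiff, List.mem_toFinset]; exact ⟨Finset.mem_univ _, hyl⟩)
        have hul : u ∉ (r :: t) := by
          rw [Finset.mem_sdiff, List.mem_toFinset] at huT
          exact huT.2
        exact ⟨y, u, hyl, hul, huy.symm⟩
    obtain ⟨c₁, c₂, hdec⟩ := List.append_of_mem hu0l
    have hchain1 : ((u0 :: c₂) ++ c₁).Chain' (addEdge G r s).Adj := by
      refine List.isChain_append.2 ⟨?_, ?_, ?_⟩
      · exact hchainA.suffix ⟨c₁, hdec.symm⟩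
      · exact hchainA.prefix ⟨u0 :: c₂, hdec.symm⟩
      · intro p hp q hq
        rw [Option.mem_def] at hp hq
        have hps : p = s := by
          rw [hdec, List.getLast?_append_cons, hp] at hs
          simpa using hs
        have hqr : q = r := by
          have hc1ne : c₁ ≠ [] := by rintro rfl; simp at hq
          have h6 : (r :: t).head? = c₁.head? := by
            rw [hdec]
            exact List.head?_append_of_ne_nil c₁ hc1ne
          rw [hr, hq] at h6
          simpa using h6.symm
        subst hps hqr
        exact hasr
    have hchainL : (w0 :: u0 :: (c₂ ++ c₁)).Chain' (addEdge G r s).Adj := by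
      simp only [List.Chain', List.isChain_cons_cons]
      refine ⟨addEdge_adj hadj0.symm, ?_⟩
      rw [← List.cons_append]
      exact hchain1
    have hpermL : ((u0 :: c₂) ++ c₁).Perm (r :: t) := by
      rw [hdec]
      exact List.perm_append_comm
    have hnodupL : (w0 :: u0 :: (c₂ ++ c₁)).Nodup := by
      rw [show (w0 :: u0 :: (c₂ ++ c₁)) = w0 :: ((u0 :: c₂) ++ c₁) from rfl, List.nodup_cons]
      exact ⟨fun hmem => hw0l (hpermL.subset hmem), hpermL.nodup_iff.2 hL.2.1⟩
    obtain ⟨v, wk, hsupp⟩ := walk_of_chain' (addEdge G r s) w0 (u0 :: (c₂ ++ c₁)) hchainL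
    have hpath : wk.IsPath := SimpleGraph.Walk.IsPath.mk' (hsupp ▸ hnodupL)
    have hlenwk : wk.length = maxPathLen G + 1 := by
      have h1 := SimpleGraph.Walk.length_support wk
      rw [hsupp] at h1
      have h2 : (w0 :: u0 :: (c₂ ++ c₁)).length = (r :: t).length + 1 := by
        rw [show (w0 :: u0 :: (c₂ ++ c₁)) = w0 :: ((u0 :: c₂) ++ c₁) from rfl,
          List.length_cons, hpermL.length_eq]
      have h3 := hL.2.2
      omega
    have hlt : maxPathLen G < maxPathLen (addEdge G r s) := by
      have h4 := length_le_maxPathLen hpath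
      omega
    exact ⟨hrs, Or.inr hlt⟩

end BoosterAux

/-- A non-Hamiltonian `(k,d)`-expander (`d ≥ 2`, `k+1 ≥ m`) on `n` vertices
which is `(m,M)`-joined (`m ≤ M ≤ n/4`) has at least `(1/16)·binom(n,2)` boosters. -/
theorem boosters_in_expanders {V : Type*} [Fintype V] (G : SimpleGraph V)
    (d : ℝ) (k m M n : ℕ) (hd : 2 ≤ d) (hkm : m ≤ k + 1) (hmM : m ≤ M)
    (hMn : (M : ℝ) ≤ (n : ℝ) / 4) (hn : Fintype.card V = n)
    (hexp : IsExpander G k d) (hj : IsJoined G m M)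
    (hnotham : ¬ G.IsHamiltonian) :
    (1 / 16 : ℝ) * (n.choose 2 : ℝ) ≤ ((boosterPairs G).card : ℝ) := by
  classical
  by_cases hm0 : m = 0
  · exfalso
    have hMn' : M ≤ n := by
      have h1 : (M : ℝ) ≤ n := by
        have h0 : (0 : ℝ) ≤ n := by positivity
        linarith
      exact_mod_cast h1
    obtain ⟨B, -, hB⟩ := Finset.exists_subset_card_eq
      (s := (Finset.univ : Finset V)) (n := M) (by rw [Finset.card_univ, hn]; exact hMn')
    obtain ⟨a, ha, -⟩ := hj ∅ B (Finset.disjoint_empty_left B) (by simp [hm0]) hB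
    exact Finset.notMem_empty a ha
  have hm : 1 ≤ m := by omega
  have hM1 : 1 ≤ M := le_trans hm hmM
  have hn4 : 4 ≤ n := by
    have h1 : (1 : ℝ) ≤ M := by exact_mod_cast hM1
    have h2 : (4 : ℝ) ≤ n := by linarith
    exact_mod_cast h2
  have hV : Nonempty V := by
    rw [← Fintype.card_pos_iff, hn]; omega
  obtain ⟨p0, hp0⟩ := BoosterAux.exists_longestList G
  set F : V → Finset V := fun r => Finset.univ.filter (fun s => IsBooster G r s) with hF
  set R0 := BoosterAux.rotEnds G p0 with hR0
  have hR0card : (n : ℝ) / 4 ≤ (R0.card : ℝ) :=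
    (BoosterAux.rotEnds_card_lower hd hkm hm hMn hn hexp hj hp0).1
  have hFcard : ∀ r ∈ R0, (n : ℝ) / 4 ≤ ((F r).card : ℝ) := by
    intro r hr
    obtain ⟨l, hcl, hlast⟩ := BoosterAux.mem_rotEnds.1 hr
    have hLl : BoosterAux.LongestList G l := hp0.rotCl hcl
    have hLrev : BoosterAux.LongestList G l.reverse := by
      refine ⟨?_, by rw [List.nodup_reverse]; exact hLl.2.1,
        by rw [List.length_reverse]; exact hLl.2.2⟩
      simp only [List.Chain', List.isChain_reverse]; change List.Chain' (flip G.Adj) l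
      have hflip : (flip G.Adj) = G.Adj := by
        funext a b
        exact propext (G.adj_comm b a)
      rw [hflip]
      exact hLl.1
    have hrevhead : l.reverse.head? = some r := by
      rw [List.head?_reverse]; exact hlast
    have hsub : BoosterAux.rotEnds G l.reverse ⊆ F r := by
      intro x hx
      obtain ⟨l', hcl', hlast'⟩ := BoosterAux.mem_rotEnds.1 hx
      have hLl' : BoosterAux.LongestList G l' := hLrev.rotCl hcl'
      have hhead' : l'.head? = some r := by rw [hcl'.head?_eq]; exact hrevhead
      have hb := BoosterAux.isBooster_of_longest hd hkm hm hmM hMn hn4 hn hexp hj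
        hLl' hhead' hlast'
      rw [hF]
      simp only [Finset.mem_filter]
      exact ⟨Finset.mem_univ _, hb⟩
    have h1 := (BoosterAux.rotEnds_card_lower hd hkm hm hMn hn hexp hj hLrev).1
    have h3 : ((BoosterAux.rotEnds G l.reverse).card : ℝ) ≤ ((F r).card : ℝ) := by
      exact_mod_cast Finset.card_le_card hsub
    linarith
  set g : V → Finset (Sym2 V) := fun r => (F r).image (fun s => s(r, s)) with hg
  have hgcard : ∀ r, (g r).card = (F r).card := fun r =>
    Finset.card_image_of_injective _ (fun a b h => Sym2.congr_right.1 h)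
  have hgsub : ∀ r, g r ⊆ boosterPairs G := by
    intro r e he
    rw [hg] at he
    simp only [Finset.mem_image] at he
    obtain ⟨x, hx, rfl⟩ := he
    rw [hF] at hx
    simp only [Finset.mem_filter] at hx
    rw [boosterPairs, Finset.mem_filter]
    exact ⟨Finset.mem_univ _, r, x, rfl, hx.2⟩
  have hsum : ∑ r ∈ R0, (g r).card ≤ 2 * (boosterPairs G).card := by
    have h1 : ∀ r ∈ R0, (g r).card = ∑ e ∈ boosterPairs G, if e ∈ g r then 1 else 0 := by
      intro r hr
      rw [Finset.sum_ite_mem, Finset.inter_eq_right.2 (hgsub r), Finset.card_eq_sum_ones]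
    calc ∑ r ∈ R0, (g r).card
        = ∑ r ∈ R0, ∑ e ∈ boosterPairs G, (if e ∈ g r then 1 else 0) :=
          Finset.sum_congr rfl h1
      _ = ∑ e ∈ boosterPairs G, ∑ r ∈ R0, (if e ∈ g r then 1 else 0) := Finset.sum_comm
      _ ≤ ∑ _e ∈ boosterPairs G, 2 := by
          refine Finset.sum_le_sum ?_
          intro e he
          rw [Finset.sum_boole]
          induction e using Sym2.inductionOn with
          | hf a b =>
            have hsub2 : R0.filter (fun r => s(a, b) ∈ g r) ⊆ {a, b} := by
              intro r hrf
              rw [Finset.mem_filter] at hrf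
              obtain ⟨-, hrg⟩ := hrf
              rw [hg] at hrg
              simp only [Finset.mem_image] at hrg
              obtain ⟨x, -, hx⟩ := hrg
              rw [Sym2.eq_iff] at hx
              rcases hx with ⟨rfl, rfl⟩ | ⟨rfl, rfl⟩
              · exact Finset.mem_insert_self _ _
              · exact Finset.mem_insert_of_mem (Finset.mem_singleton_self _)
            have h5 : (R0.filter (fun r => s(a, b) ∈ g r)).card ≤ 2 :=
              le_trans (Finset.card_le_card hsub2)
                ((Finset.card_insert_le a {b}).trans (by simp))
            exact_mod_cast h5
      _ = 2 * (boosterPairs G).card := by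
          rw [Finset.sum_const, smul_eq_mul, mul_comm]
  -- final numeric computation
  have e1 : ((n : ℝ) / 4) * ((n : ℝ) / 4) ≤ ((R0.card : ℝ)) * ((n : ℝ) / 4) :=
    mul_le_mul_of_nonneg_right hR0card (by positivity)
  have e2 : ((R0.card : ℝ)) * ((n : ℝ) / 4) ≤ ∑ r ∈ R0, ((F r).card : ℝ) := by
    calc ((R0.card : ℝ)) * ((n : ℝ) / 4) = ∑ _r ∈ R0, ((n : ℝ) / 4) := by
          rw [Finset.sum_const, nsmul_eq_mul]
      _ ≤ ∑ r ∈ R0, ((F r).card : ℝ) := Finset.sum_le_sum hFcard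
  have e3 : ∑ r ∈ R0, ((F r).card : ℝ) = ((∑ r ∈ R0, (g r).card : ℕ) : ℝ) := by
    push_cast
    refine Finset.sum_congr rfl ?_
    intro r hr
    rw [hgcard r]
  have e4 : ((∑ r ∈ R0, (g r).card : ℕ) : ℝ) ≤ 2 * ((boosterPairs G).card : ℝ) := by
    exact_mod_cast hsum
  have e5 : ((n : ℝ) / 4) * ((n : ℝ) / 4) ≤ 2 * ((boosterPairs G).card : ℝ) := by
    linarith
  rw [Nat.cast_choose_two]
  have hn0 : (0 : ℝ) ≤ n := by positivity
  nlinarith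
end

section
/- Let α, δ > 0 satisfy 1024δ ≤ α² and δ ≤ 1/e. For p ≥ 1/n, let G = G(n,p) be the binomial random graph on a vertex set V of size n, and let (𝓕, 𝓑) be a (δp, α)-boosterable family on V. Then with probability tending to 1 as n → ∞, every F ∈ 𝓕 with F ⊆ G satisfies |B_F ∩ E(G)| > αpn²/2. -/
open MeasureTheory
open scoped Classical

/-- Bernoulli measure on `Bool` with parameter `p` (capped into `[0,1]`). -/
noncomputable def bernoulliBool (p : ℝ) : Measure Bool :=
  (PMF.bernoulli (min (Real.toNNReal p) 1) (min_le_right _ _)).toMeasure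

instance (p : ℝ) : IsProbabilityMeasure (bernoulliBool p) :=
  PMF.toMeasure.isProbabilityMeasure _

/-- The Erdős–Rényi random graph measure: each unordered pair of vertices of `Fin N`
is an edge independently with probability `p`. -/
noncomputable def gnp (N : ℕ) (p : ℝ) : Measure (Sym2 (Fin N) → Bool) :=
  Measure.pi fun _ => bernoulliBool p

/-- The simple graph determined by an outcome `ω`. -/
def graphOf {N : ℕ} (ω : Sym2 (Fin N) → Bool) : SimpleGraph (Fin N) :=
  SimpleGraph.fromEdgeSet {e | ω e = true}

/-- `r(n)`: the cycle Ramsey number, `2n-1` for odd `n` and `3n/2 - 1` for even `n`. -/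
def cycleRamsey (n : ℕ) : ℕ := if Odd n then 2 * n - 1 else 3 * n / 2 - 1

/-- `G` contains a cycle of length `ℓ`. -/
def hasCycle {V : Type*} (G : SimpleGraph V) (ℓ : ℕ) : Prop :=
  ∃ (v : V) (w : G.Walk v v), w.IsCycle ∧ w.length = ℓ

/-- The colouring `c` of the edges of `G` admits a monochromatic cycle of length `n`. -/
def hasMonoCycle {V : Type*} (G : SimpleGraph V) (c : Sym2 V → Bool) (n : ℕ) : Prop :=
  ∃ (b : Bool) (v : V) (w : G.Walk v v),
    w.IsCycle ∧ w.length = n ∧ ∀ e ∈ w.edges, c e = b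
/-- `(𝓕, 𝓑)` is a `(δ', α)`-boosterable family on `Fin n`: each `F ∈ 𝓕` has at most `δ'n²`
edges, and `B_F` is a set of at least `αn²` unordered pairs of distinct vertices disjoint
from `E(F)`. -/
noncomputable def Boosterable {n : ℕ} (𝓕 : Set (SimpleGraph (Fin n)))
    (𝓑 : SimpleGraph (Fin n) → Finset (Sym2 (Fin n))) (δ' α : ℝ) : Prop :=
  ∀ F ∈ 𝓕, ((F.edgeFinset.card : ℝ) ≤ δ' * (n : ℝ) ^ 2) ∧
    (∀ e ∈ 𝓑 F, ¬ e.IsDiag ∧ e ∉ F.edgeSet) ∧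
    (α * (n : ℝ) ^ 2 ≤ ((𝓑 F).card : ℝ))

lemma log_le_div_e {x : ℝ} (hx : 0 < x) : Real.log x ≤ x / Real.exp 1 := by
  have h := Real.log_le_sub_one_of_pos (x := x / Real.exp 1) (by positivity)
  rw [Real.log_div (ne_of_gt hx) (by positivity), Real.log_exp] at h
  linarith

lemma fact_ge_pow (k : ℕ) : ((k : ℝ) / Real.exp 1) ^ k ≤ (k.factorial : ℝ) := by
  induction k with
  | zero => simp
  | succ n ih =>
    have he : (0:ℝ) < Real.exp 1 := Real.exp_pos 1
    have key : ((n:ℝ) + 1) ^ n ≤ Real.exp 1 * (n:ℝ) ^ n := by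
      rcases Nat.eq_zero_or_pos n with h | h
      · simp [h]
      · have hn : (0:ℝ) < (n:ℝ) := by exact_mod_cast h
        have h1 : (1 : ℝ) + 1 / n ≤ Real.exp (1 / n) := by
          have := Real.add_one_le_exp (1 / (n:ℝ)); linarith
        have h2 : ((1 : ℝ) + 1 / n) ^ n ≤ Real.exp (1 / n) ^ n :=
          pow_le_pow_left₀ (by positivity) h1 n
        have h3 : Real.exp (1 / (n:ℝ)) ^ n = Real.exp 1 := by
          rw [← Real.exp_nat_mul, mul_one_div, div_self hn.ne']
        calc ((n:ℝ) + 1) ^ n = ((n:ℝ) * (1 + 1/n)) ^ n := by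
              rw [mul_add, mul_one, mul_one_div, div_self hn.ne']
            _ = (n:ℝ)^n * (1 + 1/n)^n := by rw [mul_pow]
            _ ≤ (n:ℝ)^n * Real.exp 1 := by
              rw [h3] at h2; exact mul_le_mul_of_nonneg_left h2 (by positivity)
            _ = Real.exp 1 * (n:ℝ)^n := by ring
    have hpow : (((n:ℝ)+1) / Real.exp 1) ^ n ≤ Real.exp 1 * ((n:ℝ)/Real.exp 1)^n := by
      rw [div_pow, div_pow]
      rw [div_le_iff₀ (by positivity)]
      calc ((n:ℝ)+1)^n ≤ Real.exp 1 * (n:ℝ)^n := key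
        _ = Real.exp 1 * (n:ℝ)^n / Real.exp 1 ^ n * Real.exp 1 ^ n := by
              field_simp
        _ ≤ Real.exp 1 * ((n:ℝ)^n / Real.exp 1 ^ n) * Real.exp 1 ^ n := by
              rw [mul_div_assoc]
    have : (((n:ℕ)+1 : ℝ) / Real.exp 1) ^ (n+1) ≤ ((n:ℝ)+1) * (n.factorial : ℝ) := by
      push_cast
      calc (((n:ℝ)+1) / Real.exp 1) ^ (n+1)
          = (((n:ℝ)+1) / Real.exp 1) * (((n:ℝ)+1)/Real.exp 1) ^ n := by rw [pow_succ]; ring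
        _ ≤ (((n:ℝ)+1) / Real.exp 1) * (Real.exp 1 * ((n:ℝ)/Real.exp 1)^n) :=
            mul_le_mul_of_nonneg_left hpow (by positivity)
        _ = ((n:ℝ)+1) * ((n:ℝ)/Real.exp 1)^n := by field_simp
        _ ≤ ((n:ℝ)+1) * (n.factorial : ℝ) := mul_le_mul_of_nonneg_left ih (by positivity)
    calc (((n+1:ℕ) : ℝ) / Real.exp 1) ^ (n+1) ≤ ((n:ℝ)+1) * (n.factorial : ℝ) := by
          push_cast at this ⊢; exact this
      _ = ((n+1).factorial : ℝ) := by rw [Nat.factorial_succ]; push_cast; ring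

lemma term_bound (α δ N : ℝ) (k : ℕ) (hα : 0 < α) (hδ : 0 < δ) (hδ1 : δ ≤ 1)
    (h1 : 1024 * δ ≤ α ^ 2) (hN : 0 ≤ N) (hk : (k : ℝ) ≤ δ * N) :
    N ^ k / (k.factorial : ℝ) ≤ Real.exp (α * N / 16) := by
  have he : (0:ℝ) < Real.exp 1 := Real.exp_pos 1
  have he2 : (2:ℝ) ≤ Real.exp 1 := by
    have := Real.exp_one_gt_d9; linarith
  have hG : Real.sqrt δ ≤ α / 32 := by
    have : δ ≤ (α/32)^2 := by nlinarith
    calc Real.sqrt δ ≤ Real.sqrt ((α/32)^2) := Real.sqrt_le_sqrt this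
      _ = α/32 := Real.sqrt_sq (by positivity)
  have hH : δ ≤ α / 32 := by
    have h1' : Real.sqrt δ ≤ 1 := by
      calc Real.sqrt δ ≤ Real.sqrt 1 := Real.sqrt_le_sqrt hδ1
        _ = 1 := Real.sqrt_one
    calc δ = Real.sqrt δ * Real.sqrt δ := (Real.mul_self_sqrt hδ.le).symm
      _ ≤ 1 * (α/32) := mul_le_mul h1' hG (Real.sqrt_nonneg _) one_pos.le
      _ = α/32 := one_mul _
  rcases Nat.eq_zero_or_pos k with hk0 | hk1
  · subst hk0; simp; positivity
  have hkR : (0:ℝ) < (k:ℝ) := by exact_mod_cast hk1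
  have hNpos : 0 < N := by nlinarith
  have hNk : (0:ℝ) < N / k := by positivity
  -- Step A
  have hfac : (0:ℝ) < ((k:ℝ)/Real.exp 1)^k := by positivity
  have stepA : N ^ k / (k.factorial : ℝ) ≤ (Real.exp 1 * N / k) ^ k := by
    have h2 : N ^ k / (k.factorial : ℝ) ≤ N ^ k / ((k:ℝ)/Real.exp 1)^k :=
      div_le_div_of_nonneg_left (by positivity) hfac (fact_ge_pow k)
    have h3 : N ^ k / ((k:ℝ)/Real.exp 1)^k = (Real.exp 1 * N / k) ^ k := by
      rw [← div_pow]; congr 1; field_simp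
    linarith [h2, h3.le]
  -- Step B/C
  have hbase : (0:ℝ) < Real.exp 1 * N / k := by positivity
  have stepB : (Real.exp 1 * N / k) ^ k = Real.exp ((k:ℝ) * (1 + Real.log (N / k))) := by
    have : Real.exp 1 * N / k = Real.exp 1 * (N / k) := by ring
    rw [this, ← Real.exp_log (x := Real.exp 1 * (N/k)) (by positivity),
      Real.log_mul (by positivity) (ne_of_gt hNk), Real.log_exp, ← Real.exp_nat_mul]
  -- Step D/E
  have stepD : Real.log (N / k) ≤ 2 * Real.sqrt (N / k) / Real.exp 1 := by
    have hs : Real.sqrt (N/k) > 0 := Real.sqrt_pos.mpr hNk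
    have : Real.log (N/k) = 2 * Real.log (Real.sqrt (N/k)) := by
      conv_lhs => rw [← Real.mul_self_sqrt hNk.le]
      rw [Real.log_mul hs.ne' hs.ne']; ring
    rw [this, mul_div_assoc]
    have := log_le_div_e hs
    linarith
  have hsk : (0:ℝ) < Real.sqrt k := Real.sqrt_pos.mpr hkR
  have stepE : (k:ℝ) * Real.sqrt (N / k) = Real.sqrt k * Real.sqrt N := by
    rw [Real.sqrt_div hN (k:ℝ)]
    have hss : Real.sqrt (k:ℝ) * Real.sqrt (k:ℝ) = (k:ℝ) := Real.mul_self_sqrt hkR.le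
    rw [mul_comm (Real.sqrt (k:ℝ)) (Real.sqrt N), ← hss]
    field_simp
    rw [Real.sqrt_sq hsk.le]
  have stepF : Real.sqrt k ≤ Real.sqrt δ * Real.sqrt N := by
    rw [← Real.sqrt_mul hδ.le]
    exact Real.sqrt_le_sqrt hk
  have hsqN : Real.sqrt N * Real.sqrt N = N := Real.mul_self_sqrt hN
  have hsd : 0 ≤ Real.sqrt δ := Real.sqrt_nonneg _
  have hsN : 0 ≤ Real.sqrt N := Real.sqrt_nonneg _
  -- combine
  have expo : (k:ℝ) * (1 + Real.log (N / k)) ≤ α * N / 16 := by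
    have h4 : (k:ℝ) * Real.log (N/k) ≤ (2 / Real.exp 1) * (Real.sqrt k * Real.sqrt N) := by
      calc (k:ℝ) * Real.log (N/k) ≤ (k:ℝ) * (2 * Real.sqrt (N/k) / Real.exp 1) :=
            mul_le_mul_of_nonneg_left stepD hkR.le
        _ = (2 / Real.exp 1) * ((k:ℝ) * Real.sqrt (N/k)) := by ring
        _ = (2 / Real.exp 1) * (Real.sqrt k * Real.sqrt N) := by rw [stepE]
    have h5 : Real.sqrt k * Real.sqrt N ≤ Real.sqrt δ * N := by
      calc Real.sqrt k * Real.sqrt N ≤ (Real.sqrt δ * Real.sqrt N) * Real.sqrt N :=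
            mul_le_mul_of_nonneg_right stepF hsN
        _ = Real.sqrt δ * N := by rw [mul_assoc, hsqN]
    have h6 : (2 / Real.exp 1) * (Real.sqrt k * Real.sqrt N) ≤ 1 * (Real.sqrt δ * N) := by
      apply mul_le_mul
      · rw [div_le_one he]; exact he2
      · exact h5
      · positivity
      · norm_num
    have h7 : Real.sqrt δ * N ≤ (α/32) * N := mul_le_mul_of_nonneg_right hG hN
    have h8 : (k:ℝ) ≤ (α/32) * N := le_trans hk (mul_le_mul_of_nonneg_right hH hN)
    nlinarith [h4, h6, h7, h8]
  calc N ^ k / (k.factorial : ℝ) ≤ (Real.exp 1 * N / k) ^ k := stepA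
    _ = Real.exp ((k:ℝ) * (1 + Real.log (N / k))) := stepB
    _ ≤ Real.exp (α * N / 16) := Real.exp_le_exp.mpr expo

lemma chernoff (b : ℕ) (p t : ℝ) (hp0 : 0 ≤ p) (hp1 : p ≤ 1) (ht0 : 0 ≤ t)
    (ht : t ≤ p * b / 2) :
    ∑ j ∈ Finset.range (b+1),
      (if (j:ℝ) ≤ t then (b.choose j : ℝ) * p^j * (1-p)^(b-j) else 0)
    ≤ Real.exp (-(p*b)/8) := by
  have hq0 : (0:ℝ) ≤ 1 - p := by linarith
  have hlog2 : (0:ℝ) ≤ Real.log 2 := Real.log_nonneg (by norm_num)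
  have key : ∀ j ∈ Finset.range (b+1),
      (if (j:ℝ) ≤ t then (b.choose j : ℝ) * p^j * (1-p)^(b-j) else 0)
      ≤ Real.exp (t * Real.log 2) * ((b.choose j : ℝ) * (p/2)^j * (1-p)^(b-j)) := by
    intro j _
    split_ifs with hj
    · have h2j : (2:ℝ)^j ≤ Real.exp (t * Real.log 2) := by
        have : (2:ℝ)^j = Real.exp ((j:ℝ) * Real.log 2) := by
          rw [Real.exp_nat_mul, Real.exp_log two_pos]
        rw [this]
        exact Real.exp_le_exp.mpr (mul_le_mul_of_nonneg_right hj hlog2)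
      have hsplit : p^j = (2:ℝ)^j * (p/2)^j := by
        rw [← mul_pow]; ring_nf
      calc (b.choose j : ℝ) * p^j * (1-p)^(b-j)
          = (2:ℝ)^j * ((b.choose j : ℝ) * (p/2)^j * (1-p)^(b-j)) := by
            rw [hsplit]; ring
        _ ≤ Real.exp (t * Real.log 2) * ((b.choose j : ℝ) * (p/2)^j * (1-p)^(b-j)) :=
            mul_le_mul_of_nonneg_right h2j (by positivity)
    · positivity
  calc ∑ j ∈ Finset.range (b+1), (if (j:ℝ) ≤ t then (b.choose j : ℝ) * p^j * (1-p)^(b-j) else 0)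
      ≤ ∑ j ∈ Finset.range (b+1),
          Real.exp (t * Real.log 2) * ((b.choose j : ℝ) * (p/2)^j * (1-p)^(b-j)) :=
        Finset.sum_le_sum key
    _ = Real.exp (t * Real.log 2) * ∑ j ∈ Finset.range (b+1),
          ((p/2)^j * (1-p)^(b-j) * (b.choose j : ℝ)) := by
        rw [Finset.mul_sum]; apply Finset.sum_congr rfl; intro j _; ring
    _ = Real.exp (t * Real.log 2) * (p/2 + (1-p))^b := by rw [add_pow]
    _ ≤ Real.exp (t * Real.log 2) * Real.exp (-(p*b)/2) := by
        apply mul_le_mul_of_nonneg_left _ (Real.exp_pos _).le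
        have h1 : p/2 + (1-p) = 1 - p/2 := by ring
        have h2 : (1 - p/2 : ℝ) ≤ Real.exp (-(p/2)) := by
          have := Real.add_one_le_exp (-(p/2)); linarith
        have h3 : (0:ℝ) ≤ 1 - p/2 := by linarith
        calc (p/2 + (1-p))^b ≤ Real.exp (-(p/2))^b := by
              rw [h1]; exact pow_le_pow_left₀ h3 h2 b
          _ = Real.exp (-(p/2) * b) := by rw [← Real.exp_nat_mul]; ring_nf
          _ = Real.exp (-(p*b)/2) := by ring_nf
    _ = Real.exp (t * Real.log 2 + -(p*b)/2) := by rw [← Real.exp_add]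
    _ ≤ Real.exp (-(p*b)/8) := by
        apply Real.exp_le_exp.mpr
        have hl : Real.log 2 ≤ 0.7 := by
          have := Real.log_two_lt_d9; linarith
        have hb0 : (0:ℝ) ≤ (b:ℝ) := Nat.cast_nonneg b
        nlinarith [mul_le_mul_of_nonneg_left hl ht0, mul_nonneg hp0 hb0]

lemma bern_true (p : ℝ) (h1 : p ≤ 1) : bernoulliBool p {true} = ENNReal.ofReal p := by
  rw [bernoulliBool, PMF.toMeasure_apply_singleton _ _ (measurableSet_singleton _)]
  simp [PMF.bernoulli_apply, min_eq_left (Real.toNNReal_le_one.mpr h1)]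
  rfl

lemma bern_false (p : ℝ) (h0 : 0 ≤ p) (h1 : p ≤ 1) :
    bernoulliBool p {false} = ENNReal.ofReal (1-p) := by
  rw [bernoulliBool, PMF.toMeasure_apply_singleton _ _ (measurableSet_singleton _)]
  simp [PMF.bernoulli_apply, min_eq_left (Real.toNNReal_le_one.mpr h1)]
  show 1 - ENNReal.ofReal p = ENNReal.ofReal (1 - p)
  rw [← ENNReal.ofReal_one, ← ENNReal.ofReal_sub _ h0]

lemma cylinder_measure {ι : Type*} [Fintype ι] (p : ℝ) (hp0 : 0 ≤ p) (hp1 : p ≤ 1)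
    (A B : Finset ι) (hAB : Disjoint A B) :
    Measure.pi (fun _ : ι => bernoulliBool p)
      {ω : ι → Bool | (∀ e ∈ A, ω e = true) ∧ (∀ e ∈ B, ω e = false)}
    = ENNReal.ofReal (p ^ A.card * (1-p) ^ B.card) := by
  set t : ι → Set Bool := fun i => if i ∈ A then {true} else if i ∈ B then {false} else Set.univ
    with ht
  have hset : {ω : ι → Bool | (∀ e ∈ A, ω e = true) ∧ (∀ e ∈ B, ω e = false)}
      = Set.pi Set.univ t := by
    ext ω
    simp only [Set.mem_setOf_eq, Set.mem_pi, Set.mem_univ, forall_true_left, ht]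
    constructor
    · rintro ⟨hA, hB⟩ i
      by_cases hiA : i ∈ A
      · simp [hiA, hA i hiA]
      · by_cases hiB : i ∈ B
        · simp [hiA, hiB, hB i hiB]
        · simp [hiA, hiB]
    · intro h
      constructor
      · intro i hi; have := h i; simpa [hi] using this
      · intro i hi
        have hiA : i ∉ A := fun hc => (Finset.disjoint_left.mp hAB hc) hi
        have := h i; simpa [hiA, hi] using this
  rw [hset, Measure.pi_pi]
  have hval : ∀ i, bernoulliBool p (t i)
      = if i ∈ A then ENNReal.ofReal p else if i ∈ B then ENNReal.ofReal (1-p) else 1 := by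
    intro i
    by_cases hiA : i ∈ A
    · simp [ht, hiA, bern_true p hp1]
    · by_cases hiB : i ∈ B
      · simp [ht, hiA, hiB, bern_false p hp0 hp1]
      · simp only [ht, hiA, hiB, if_false]
        exact measure_univ
  calc ∏ i, bernoulliBool p (t i)
      = ∏ i, (if i ∈ A then ENNReal.ofReal p else if i ∈ B then ENNReal.ofReal (1-p) else 1) :=
        Finset.prod_congr rfl (fun i _ => hval i)
    _ = ∏ i ∈ A ∪ B, (if i ∈ A then ENNReal.ofReal p else if i ∈ B then ENNReal.ofReal (1-p) else 1) := by
        symm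
        apply Finset.prod_subset (Finset.subset_univ _)
        intro i _ hi
        simp only [Finset.mem_union, not_or] at hi
        simp [hi.1, hi.2]
    _ = (∏ i ∈ A, (if i ∈ A then ENNReal.ofReal p else if i ∈ B then ENNReal.ofReal (1-p) else 1))
        * ∏ i ∈ B, (if i ∈ A then ENNReal.ofReal p else if i ∈ B then ENNReal.ofReal (1-p) else 1) :=
        Finset.prod_union hAB
    _ = ENNReal.ofReal p ^ A.card * ENNReal.ofReal (1-p) ^ B.card := by
        rw [Finset.prod_congr rfl (fun i hi => by simp [hi] : ∀ i ∈ A, _ = ENNReal.ofReal p)]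
        rw [Finset.prod_congr rfl
          (fun i hi => by simp [hi, Finset.disjoint_right.mp hAB hi] :
            ∀ i ∈ B, _ = ENNReal.ofReal (1-p))]
        rw [Finset.prod_const, Finset.prod_const]
    _ = ENNReal.ofReal (p ^ A.card * (1-p) ^ B.card) := by
        rw [ENNReal.ofReal_mul (by positivity), ENNReal.ofReal_pow hp0,
          ENNReal.ofReal_pow (by linarith)]

lemma le_graphOf_iff {N : ℕ} (F : SimpleGraph (Fin N)) (ω : Sym2 (Fin N) → Bool) :
    F ≤ graphOf ω ↔ ∀ e ∈ F.edgeFinset, ω e = true := by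
  rw [← SimpleGraph.edgeSet_subset_edgeSet, graphOf, SimpleGraph.edgeSet_fromEdgeSet]
  constructor
  · intro h e he
    rw [SimpleGraph.mem_edgeFinset] at he
    exact (h he).1
  · intro h e he
    exact ⟨h e (SimpleGraph.mem_edgeFinset.mpr he), SimpleGraph.not_isDiag_of_mem_edgeSet F he⟩

lemma mem_graphOf_edgeFinset {N : ℕ} (ω : Sym2 (Fin N) → Bool) (e : Sym2 (Fin N))
    (he : ¬ e.IsDiag) : e ∈ (graphOf ω).edgeFinset ↔ ω e = true := by
  rw [SimpleGraph.mem_edgeFinset, graphOf, SimpleGraph.edgeSet_fromEdgeSet]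
  simp [he]

lemma badF_bound {n : ℕ} (p t : ℝ) (hp0 : 0 ≤ p) (hp1 : p ≤ 1) (ht0 : 0 ≤ t)
    (F : SimpleGraph (Fin n)) (B : Finset (Sym2 (Fin n)))
    (hBd : ∀ e ∈ B, ¬ e.IsDiag ∧ e ∉ F.edgeSet)
    (ht : t ≤ p * B.card / 2) :
    gnp n p {ω | F ≤ graphOf ω ∧ ((B ∩ (graphOf ω).edgeFinset).card : ℝ) ≤ t}
    ≤ ENNReal.ofReal (p ^ F.edgeFinset.card * Real.exp (-(p * B.card)/8)) := by
  set b := B.card with hb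
  set 𝒮 := B.powerset.filter (fun S => (S.card : ℝ) ≤ t) with h𝒮
  have hEB : Disjoint F.edgeFinset B := by
    rw [Finset.disjoint_right]
    intro e he
    rw [SimpleGraph.mem_edgeFinset]
    exact (hBd e he).2
  -- covering
  have hcov : {ω : Sym2 (Fin n) → Bool |
        F ≤ graphOf ω ∧ ((B ∩ (graphOf ω).edgeFinset).card : ℝ) ≤ t}
      ⊆ ⋃ S ∈ 𝒮, {ω : Sym2 (Fin n) → Bool |
        (∀ e ∈ F.edgeFinset ∪ S, ω e = true) ∧ (∀ e ∈ B \ S, ω e = false)} := by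
    intro ω hω
    obtain ⟨hle, hcard⟩ := hω
    set S := B.filter (fun e => ω e = true) with hS
    have hSeq : S = B ∩ (graphOf ω).edgeFinset := by
      ext e
      simp only [hS, Finset.mem_filter, Finset.mem_inter]
      constructor
      · rintro ⟨h1, h2⟩
        exact ⟨h1, (mem_graphOf_edgeFinset ω e (hBd e h1).1).mpr h2⟩
      · rintro ⟨h1, h2⟩
        exact ⟨h1, (mem_graphOf_edgeFinset ω e (hBd e h1).1).mp h2⟩
    have hSmem : S ∈ 𝒮 := by
      rw [h𝒮, Finset.mem_filter]
      refine ⟨Finset.mem_powerset.mpr (Finset.filter_subset _ _), ?_⟩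
      rw [hSeq]; exact hcard
    refine Set.mem_biUnion hSmem ⟨?_, ?_⟩
    · intro e he
      rcases Finset.mem_union.mp he with h | h
      · exact (le_graphOf_iff F ω).mp hle e h
      · exact (Finset.mem_filter.mp h).2
    · intro e he
      obtain ⟨h1, h2⟩ := Finset.mem_sdiff.mp he
      by_contra hc
      exact h2 (Finset.mem_filter.mpr ⟨h1, by simpa using hc⟩)
  refine le_trans (measure_mono hcov) ?_
  refine le_trans (measure_biUnion_finset_le 𝒮 _) ?_
  -- each cylinder
  have hcyl : ∀ S ∈ 𝒮, gnp n p {ω : Sym2 (Fin n) → Bool |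
      (∀ e ∈ F.edgeFinset ∪ S, ω e = true) ∧ (∀ e ∈ B \ S, ω e = false)}
      = ENNReal.ofReal (p ^ F.edgeFinset.card * (p ^ S.card * (1-p) ^ (b - S.card))) := by
    intro S hs
    obtain ⟨hsub, hcard⟩ : S ⊆ B ∧ (S.card : ℝ) ≤ t := by
      have := Finset.mem_filter.mp hs
      exact ⟨Finset.mem_powerset.mp this.1, this.2⟩
    have hdisj : Disjoint (F.edgeFinset ∪ S) (B \ S) := by
      rw [Finset.disjoint_union_left]
      exact ⟨Finset.disjoint_of_subset_right (Finset.sdiff_subset) hEB,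
        Finset.sdiff_disjoint.symm⟩
    rw [gnp, cylinder_measure p hp0 hp1 _ _ hdisj]
    congr 1
    rw [Finset.card_union_of_disjoint (Finset.disjoint_of_subset_right hsub hEB),
      Finset.card_sdiff_of_subset hsub, pow_add, mul_assoc]
  calc ∑ S ∈ 𝒮, gnp n p {ω : Sym2 (Fin n) → Bool |
        (∀ e ∈ F.edgeFinset ∪ S, ω e = true) ∧ (∀ e ∈ B \ S, ω e = false)}
      = ∑ S ∈ 𝒮, ENNReal.ofReal
          (p ^ F.edgeFinset.card * (p ^ S.card * (1-p) ^ (b - S.card))) :=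
        Finset.sum_congr rfl hcyl
    _ = ENNReal.ofReal (∑ S ∈ 𝒮,
          p ^ F.edgeFinset.card * (p ^ S.card * (1-p) ^ (b - S.card))) := by
        rw [ENNReal.ofReal_sum_of_nonneg]
        intro S _
        have : (0:ℝ) ≤ 1 - p := by linarith
        positivity
    _ ≤ ENNReal.ofReal (p ^ F.edgeFinset.card * Real.exp (-(p * b)/8)) := by
        apply ENNReal.ofReal_le_ofReal
        rw [← Finset.mul_sum]
        apply mul_le_mul_of_nonneg_left _ (by positivity)
        -- ∑_{S ∈ 𝒮} p^|S| (1-p)^{b-|S|} ≤ exp(-(pb)/8)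
        have hq0 : (0:ℝ) ≤ 1 - p := by linarith
        have step1 : ∑ S ∈ 𝒮, p ^ S.card * (1-p) ^ (b - S.card)
            = ∑ S ∈ B.powerset, (if ((S.card:ℝ) ≤ t) then p ^ S.card * (1-p) ^ (b - S.card) else 0) := by
          rw [h𝒮, Finset.sum_filter]
        have step2 : ∑ S ∈ B.powerset,
              (if ((S.card:ℝ) ≤ t) then p ^ S.card * (1-p) ^ (b - S.card) else 0)
            = ∑ j ∈ Finset.range (b+1),
              (if ((j:ℝ) ≤ t) then (b.choose j : ℝ) * p^j * (1-p)^(b-j) else 0) := by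
          rw [Finset.sum_powerset]
          apply Finset.sum_congr rfl
          intro j _
          have : ∀ S ∈ Finset.powersetCard j B,
              (if ((S.card:ℝ) ≤ t) then p ^ S.card * (1-p) ^ (b - S.card) else 0)
              = (if ((j:ℝ) ≤ t) then p^j * (1-p)^(b-j) else 0) := by
            intro S hS
            rw [(Finset.mem_powersetCard.mp hS).2]
          rw [Finset.sum_congr rfl this, Finset.sum_const, Finset.card_powersetCard, ← hb,
            nsmul_eq_mul]
          split_ifs
          · ring
          · ring
        rw [step1, step2]
        exact chernoff b p t hp0 hp1 ht0 ht

lemma family_sum_bound {n : ℕ} (p δ α : ℝ) (hp0 : 0 ≤ p) (hp1 : p ≤ 1)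
    (hα : 0 < α) (hδ : 0 < δ) (hδ1 : δ ≤ 1) (h1 : 1024 * δ ≤ α ^ 2)
    (𝓕' : Finset (SimpleGraph (Fin n)))
    (hcard : ∀ F ∈ 𝓕', (F.edgeFinset.card : ℝ) ≤ δ * p * (n:ℝ)^2) :
    ∑ F ∈ 𝓕', p ^ F.edgeFinset.card
    ≤ ((Nat.floor (δ * p * (n:ℝ)^2) : ℝ) + 1) * Real.exp (α * (p * (n:ℝ)^2) / 16) := by
  set K := Nat.floor (δ * p * (n:ℝ)^2) with hK
  set M := Fintype.card (Sym2 (Fin n)) with hM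
  have hMn : (M:ℝ) * p ≤ p * (n:ℝ)^2 := by
    have h2 : M ≤ n^2 := by
      rw [hM, Sym2.card, Fintype.card_fin]
      calc (n+1).choose 2 = (n+1) * n / 2 := by
            rw [Nat.choose_two_right]; simp
        _ ≤ n^2 := by
            apply Nat.div_le_of_le_mul
            nlinarith
    have : (M:ℝ) ≤ (n:ℝ)^2 := by exact_mod_cast h2
    nlinarith
  have hNnn : (0:ℝ) ≤ p * (n:ℝ)^2 := by positivity
  -- per-term bound
  have hterm : ∀ j : ℕ, j ≤ K → (M.choose j : ℝ) * p ^ j ≤ Real.exp (α * (p * (n:ℝ)^2) / 16) := by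
    intro j hj
    have h3 : (M.choose j : ℝ) * p ^ j ≤ ((M:ℝ) * p) ^ j / (j.factorial : ℝ) := by
      have h := Nat.choose_le_pow_div (α := ℝ) j M
      have := mul_le_mul_of_nonneg_right h (pow_nonneg hp0 j)
      calc (M.choose j : ℝ) * p ^ j ≤ (M:ℝ)^j / (j.factorial:ℝ) * p ^ j := this
        _ = ((M:ℝ) * p) ^ j / (j.factorial : ℝ) := by rw [mul_pow]; ring
    have h4 : ((M:ℝ) * p) ^ j / (j.factorial : ℝ) ≤ (p * (n:ℝ)^2) ^ j / (j.factorial : ℝ) := by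
      apply div_le_div_of_nonneg_right _ (by positivity)
      · exact pow_le_pow_left₀ (by positivity) hMn j
    have h5 : (j : ℝ) ≤ δ * (p * (n:ℝ)^2) := by
      calc (j:ℝ) ≤ (K:ℝ) := by exact_mod_cast hj
        _ ≤ δ * p * (n:ℝ)^2 := Nat.floor_le (by positivity)
        _ = δ * (p * (n:ℝ)^2) := by ring
    calc (M.choose j : ℝ) * p ^ j ≤ (p * (n:ℝ)^2) ^ j / (j.factorial : ℝ) := le_trans h3 h4
      _ ≤ Real.exp (α * (p * (n:ℝ)^2) / 16) :=
          term_bound α δ _ j hα hδ hδ1 h1 hNnn h5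
  -- sum over family
  have hinj : Set.InjOn (fun F : SimpleGraph (Fin n) => F.edgeFinset) 𝓕' :=
    fun a _ b _ h => SimpleGraph.edgeFinset_inj.mp h
  rw [← Finset.sum_image (f := fun s : Finset (Sym2 (Fin n)) => p ^ s.card)
    (fun a ha b hb h => hinj ha hb h)]
  have hsub : 𝓕'.image (fun F => F.edgeFinset)
      ⊆ (Finset.univ : Finset (Sym2 (Fin n))).powerset.filter (fun s => s.card ≤ K) := by
    intro s hs
    obtain ⟨F, hF, rfl⟩ := Finset.mem_image.mp hs
    rw [Finset.mem_filter, Finset.mem_powerset]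
    exact ⟨Finset.subset_univ _, Nat.le_floor (hcard F hF)⟩
  calc ∑ s ∈ 𝓕'.image (fun F => F.edgeFinset), p ^ s.card
      ≤ ∑ s ∈ (Finset.univ : Finset (Sym2 (Fin n))).powerset.filter (fun s => s.card ≤ K),
          p ^ s.card :=
        Finset.sum_le_sum_of_subset_of_nonneg hsub (fun _ _ _ => by positivity)
    _ = ∑ s ∈ (Finset.univ : Finset (Sym2 (Fin n))).powerset,
          (if s.card ≤ K then p ^ s.card else 0) := by rw [Finset.sum_filter]
    _ = ∑ j ∈ Finset.range (M+1), (if j ≤ K then (M.choose j : ℝ) * p ^ j else 0) := by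
        rw [Finset.sum_powerset]
        rw [Finset.card_univ, ← hM]
        apply Finset.sum_congr rfl
        intro j _
        have : ∀ s ∈ Finset.powersetCard j (Finset.univ : Finset (Sym2 (Fin n))),
            (if s.card ≤ K then p ^ s.card else 0) = (if j ≤ K then p ^ j else 0) := by
          intro s hs
          rw [(Finset.mem_powersetCard.mp hs).2]
        rw [Finset.sum_congr rfl this, Finset.sum_const, Finset.card_powersetCard,
          Finset.card_univ, ← hM, nsmul_eq_mul]
        split_ifs
        · ring
        · ring
    _ ≤ ∑ j ∈ Finset.range (M+1),
          (if j ≤ K then Real.exp (α * (p * (n:ℝ)^2) / 16) else 0) := by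
        apply Finset.sum_le_sum
        intro j _
        split_ifs with h
        · exact hterm j h
        · exact le_refl 0
    _ ≤ ((K:ℝ) + 1) * Real.exp (α * (p * (n:ℝ)^2) / 16) := by
        rw [← Finset.sum_filter, Finset.sum_const, nsmul_eq_mul]
        apply mul_le_mul_of_nonneg_right _ (Real.exp_pos _).le
        have : (Finset.range (M+1)).filter (fun j => j ≤ K) ⊆ Finset.range (K+1) := by
          intro j hj
          rw [Finset.mem_range]
          exact Nat.lt_succ_of_le (Finset.mem_filter.mp hj).2
        have hc := Finset.card_le_card this
        rw [Finset.card_range] at hc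
        exact_mod_cast hc

open Filter in
lemma tendsto_poly_exp (c : ℝ) (hc : 0 < c) :
    Filter.Tendsto (fun x : ℝ => (x^2 + 1) * Real.exp (-(c * x))) Filter.atTop (nhds 0) := by
  have A : Tendsto (fun x : ℝ => c * x) atTop atTop :=
    Tendsto.const_mul_atTop hc tendsto_id
  have B := (Real.tendsto_pow_mul_exp_neg_atTop_nhds_zero 2).comp A
  have C : Tendsto (fun x : ℝ => Real.exp (-(c * x))) atTop (nhds 0) :=
    Real.tendsto_exp_atBot.comp (tendsto_neg_atBot_iff.mpr A)
  have D := (B.const_mul (1/c^2)).add C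
  simp only [mul_zero, add_zero, zero_add] at D
  apply D.congr
  intro x
  simp only [Function.comp_apply]
  field_simp

instance gnp_prob (N : ℕ) (p : ℝ) : IsProbabilityMeasure (gnp N p) := by
  unfold gnp; infer_instance

/-- Let `1024δ ≤ α²` and `δ ≤ 1/e`. For `p ≥ 1/n` and any `(δp, α)`-
boosterable family `(𝓕, 𝓑)`, w.h.p. every `F ∈ 𝓕` contained in `G(n,p)` satisfies
`|B_F ∩ E(G)| > αpn²/2`. -/
theorem boosters_appear (α δ : ℝ) (hα : 0 < α) (hδ : 0 < δ)
    (h1 : 1024 * δ ≤ α ^ 2) (h2 : δ ≤ 1 / Real.exp 1) :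
    ∀ ε : ℝ, 0 < ε → ∃ n₀ : ℕ, ∀ n : ℕ, n₀ ≤ n → ∀ p : ℝ, 1 / (n : ℝ) ≤ p → p ≤ 1 →
    ∀ (𝓕 : Set (SimpleGraph (Fin n))) (𝓑 : SimpleGraph (Fin n) → Finset (Sym2 (Fin n))),
    Boosterable 𝓕 𝓑 (δ * p) α →
    ENNReal.ofReal (1 - ε) ≤ gnp n p {ω | ∀ F ∈ 𝓕, F ≤ graphOf ω →
      α * p * (n : ℝ) ^ 2 / 2 < (((𝓑 F) ∩ (graphOf ω).edgeFinset).card : ℝ)} := by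
  intro ε hε
  have hc : (0:ℝ) < α/16 := by positivity
  have T2 : Filter.Tendsto (fun n : ℕ => ((n:ℝ)^2+1) * Real.exp (-(α/16 * n)))
      Filter.atTop (nhds 0) :=
    (tendsto_poly_exp (α/16) hc).comp tendsto_natCast_atTop_atTop
  have hev : ∀ᶠ n : ℕ in Filter.atTop, ((n:ℝ)^2+1) * Real.exp (-(α/16 * n)) < ε :=
    T2.eventually_lt_const hε
  obtain ⟨n₀, hn₀⟩ := Filter.eventually_atTop.mp hev
  refine ⟨max n₀ 1, ?_⟩
  intro n hn p hp1n hp1 𝓕 𝓑 hB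
  have hn1 : 1 ≤ n := le_trans (le_max_right _ _) hn
  have hn₀n : n₀ ≤ n := le_trans (le_max_left _ _) hn
  have hnR : (1:ℝ) ≤ (n:ℝ) := by exact_mod_cast hn1
  have hnR0 : (0:ℝ) < (n:ℝ) := by linarith
  have hp0 : (0:ℝ) < p := lt_of_lt_of_le (by positivity) hp1n
  have hδ1 : δ ≤ 1 := by
    have : (1:ℝ) ≤ Real.exp 1 := by
      have := Real.add_one_le_exp (1:ℝ); linarith
    have h3 : 1 / Real.exp 1 ≤ 1 := by
      rw [div_le_one (by positivity)]; exact this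
    linarith
  set N := p * (n:ℝ)^2 with hN
  have hNn : (n:ℝ) ≤ N := by
    have h4 := mul_le_mul_of_nonneg_right hp1n (le_of_lt (by positivity : (0:ℝ) < (n:ℝ)^2))
    have h5 : 1 / (n:ℝ) * (n:ℝ)^2 = (n:ℝ) := by field_simp
    rw [h5] at h4; exact h4
  set t := α * p * (n:ℝ)^2 / 2 with htdef
  have ht0 : 0 ≤ t := by positivity
  set good := {ω : Sym2 (Fin n) → Bool | ∀ F ∈ 𝓕, F ≤ graphOf ω →
      α * p * (n : ℝ) ^ 2 / 2 < (((𝓑 F) ∩ (graphOf ω).edgeFinset).card : ℝ)} with hgood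
  have hfin : 𝓕.Finite := Set.toFinite 𝓕
  set F𝓕 := hfin.toFinset with hF𝓕
  -- cover the bad event
  have hbadsub : goodᶜ ⊆ ⋃ F ∈ F𝓕, {ω : Sym2 (Fin n) → Bool |
      F ≤ graphOf ω ∧ (((𝓑 F) ∩ (graphOf ω).edgeFinset).card : ℝ) ≤ t} := by
    intro ω hω
    simp only [hgood, Set.mem_compl_iff, Set.mem_setOf_eq, not_forall] at hω
    obtain ⟨F, hF, hle, hcard⟩ := hω
    exact Set.mem_biUnion (hfin.mem_toFinset.mpr hF) ⟨hle, not_lt.mp hcard⟩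
  -- per-F bound
  have hbound : ∀ F ∈ F𝓕, gnp n p {ω : Sym2 (Fin n) → Bool |
      F ≤ graphOf ω ∧ (((𝓑 F) ∩ (graphOf ω).edgeFinset).card : ℝ) ≤ t}
      ≤ ENNReal.ofReal (p ^ F.edgeFinset.card * Real.exp (-(α * N)/8)) := by
    intro F hF
    obtain ⟨hEcard, hBd, hBcard⟩ := hB F (hfin.mem_toFinset.mp hF)
    have hbge : α * (n:ℝ)^2 ≤ ((𝓑 F).card : ℝ) := hBcard
    have ht : t ≤ p * ((𝓑 F).card : ℝ) / 2 := by
      rw [htdef]; nlinarith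
    refine le_trans (badF_bound p t hp0.le hp1 ht0 F (𝓑 F) hBd ht) ?_
    apply ENNReal.ofReal_le_ofReal
    apply mul_le_mul_of_nonneg_left _ (by positivity)
    apply Real.exp_le_exp.mpr
    rw [hN]; nlinarith
  -- the numeric bound
  have hreal : (∑ F ∈ F𝓕, p ^ F.edgeFinset.card * Real.exp (-(α * N)/8)) ≤ ε := by
    rw [← Finset.sum_mul]
    have hKn : ((Nat.floor (δ * p * (n:ℝ)^2) : ℝ) + 1) ≤ (n:ℝ)^2 + 1 := by
      have h6 : (Nat.floor (δ * p * (n:ℝ)^2) : ℝ) ≤ δ * p * (n:ℝ)^2 :=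
        Nat.floor_le (by positivity)
      nlinarith
    have hsum := family_sum_bound p δ α hp0.le hp1 hα hδ hδ1 h1 F𝓕
      (fun F hF => by
        have := (hB F (hfin.mem_toFinset.mp hF)).1
        calc (F.edgeFinset.card : ℝ) ≤ δ * p * (n:ℝ)^2 := by linarith [this]
          _ = δ * p * (n:ℝ)^2 := rfl)
    calc (∑ F ∈ F𝓕, p ^ F.edgeFinset.card) * Real.exp (-(α * N)/8)
        ≤ (((Nat.floor (δ * p * (n:ℝ)^2) : ℝ) + 1) * Real.exp (α * N / 16))
          * Real.exp (-(α * N)/8) := by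
          apply mul_le_mul_of_nonneg_right _ (Real.exp_pos _).le
          rw [hN]; exact hsum
      _ = ((Nat.floor (δ * p * (n:ℝ)^2) : ℝ) + 1) * Real.exp (α * N / 16 + -(α * N)/8) := by
          rw [Real.exp_add]; ring
      _ ≤ ((n:ℝ)^2 + 1) * Real.exp (-(α/16 * n)) := by
          apply mul_le_mul hKn _ (Real.exp_pos _).le (by positivity)
          apply Real.exp_le_exp.mpr
          have : α * N / 16 + -(α * N)/8 = -(α/16 * N) := by ring
          rw [this]
          have : α/16 * (n:ℝ) ≤ α/16 * N := by nlinarith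
          linarith
      _ ≤ ε := (hn₀ n hn₀n).le
  -- put it together in ENNReal
  have hbad : gnp n p goodᶜ ≤ ENNReal.ofReal ε := by
    refine le_trans (measure_mono hbadsub) ?_
    refine le_trans (measure_biUnion_finset_le F𝓕 _) ?_
    calc ∑ F ∈ F𝓕, gnp n p {ω : Sym2 (Fin n) → Bool |
          F ≤ graphOf ω ∧ (((𝓑 F) ∩ (graphOf ω).edgeFinset).card : ℝ) ≤ t}
        ≤ ∑ F ∈ F𝓕, ENNReal.ofReal (p ^ F.edgeFinset.card * Real.exp (-(α * N)/8)) :=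
          Finset.sum_le_sum hbound
      _ = ENNReal.ofReal (∑ F ∈ F𝓕, p ^ F.edgeFinset.card * Real.exp (-(α * N)/8)) := by
          rw [ENNReal.ofReal_sum_of_nonneg]
          intro F _; positivity
      _ ≤ ENNReal.ofReal ε := ENNReal.ofReal_le_ofReal hreal
  have hcompl : gnp n p good = 1 - gnp n p goodᶜ := by
    have hms : MeasurableSet goodᶜ := (Set.to_countable _).measurableSet
    have := measure_compl (μ := gnp n p) hms (measure_ne_top _ _)
    rw [compl_compl, measure_univ] at this
    exact this
  rw [hcompl]
  calc ENNReal.ofReal (1 - ε) = 1 - ENNReal.ofReal ε := by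
        rw [ENNReal.ofReal_sub 1 hε.le, ENNReal.ofReal_one]
    _ ≤ 1 - gnp n p goodᶜ := tsub_le_tsub_left hbad 1
end
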